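/- arXiv:1803.09185 — 5 statements merged into one kernel-verified Lean document; each statement's English description precedes it below -/
import Mathlib

section
/- The map sending a composition λ = (λ_1, …, λ_m) of k with m parts to the vector (b_1 − b_2, …, b_{k−1} − b_k, b_k), where b_i = #{t ∈ {1,…,m−1} : λ_1 + ⋯ + λ_t ≥ i}, is a bijection from the set of compositions of k into m parts onto the set of vectors (a_1,…,a_k) of nonnegative integers with a_1 + ⋯ + a_k ≤ m − 1. -/
/-- `b_i` for a composition `lam` of `k` into `m` parts:
the number of `t ∈ {1,…,m−1}` with `lam_1 + ⋯ + lam_t ≥ i` (here `i` is 1-based,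
represented by `i : Fin k` standing for `i+1`). -/
noncomputable def slimB (m k : ℕ) (lam : Fin m → ℕ) (i : Fin k) : ℕ :=
  ((Finset.Icc 1 (m - 1)).filter
    (fun t => (i : ℕ) + 1 ≤ ∑ j ∈ Finset.range t, (if h : j < m then lam ⟨j, h⟩ else 0))).card

/-- The map `λ ↦ λ̈ = (b_1 − b_2, …, b_{k−1} − b_k, b_k)`. -/
noncomputable def slimDdot (m k : ℕ) (lam : Fin m → ℕ) : Fin k → ℕ :=
  fun i => slimB m k lam i -
    (if h : (i : ℕ) + 1 < k then slimB m k lam ⟨(i : ℕ) + 1, h⟩ else 0)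

namespace SlimAux

open Finset

/-- Partial sums of `lam`, extended by zero. -/
def Sl (m : ℕ) (lam : Fin m → ℕ) (t : ℕ) : ℕ :=
  ∑ j ∈ Finset.range t, (if h : j < m then lam ⟨j, h⟩ else 0)

lemma Sl_mono (m : ℕ) (lam : Fin m → ℕ) : Monotone (Sl m lam) := fun s t h =>
  Finset.sum_le_sum_of_subset (Finset.range_subset_range.2 h)

lemma Sl_zero (m : ℕ) (lam : Fin m → ℕ) : Sl m lam 0 = 0 := by simp [Sl]

lemma Sl_succ (m : ℕ) (lam : Fin m → ℕ) (t : ℕ) (ht : t < m) :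
    Sl m lam (t + 1) = Sl m lam t + lam ⟨t, ht⟩ := by
  simp [Sl, Finset.sum_range_succ, ht]

lemma Sl_of_le (m : ℕ) (lam : Fin m → ℕ) (t : ℕ) (ht : m ≤ t) :
    Sl m lam t = ∑ i, lam i := by
  have h1 : Sl m lam t = Sl m lam m + ∑ j ∈ Finset.Ico m t, (if h : j < m then lam ⟨j, h⟩ else 0) := by
    rw [Sl, Sl, Finset.sum_range_add_sum_Ico _ ht]
  have h2 : ∑ j ∈ Finset.Ico m t, (if h : j < m then lam ⟨j, h⟩ else 0) = 0 := by
    apply Finset.sum_eq_zero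
    intro j hj
    rw [Finset.mem_Ico] at hj
    rw [dif_neg (by omega)]
  have h3 : Sl m lam m = ∑ i, lam i := by
    rw [Sl, ← Fin.sum_univ_eq_sum_range]
    exact Finset.sum_congr rfl fun i _ => by simp [i.isLt]
  rw [h1, h2, h3, add_zero]

lemma Sl_le (m k : ℕ) (lam : Fin m → ℕ) (hsum : ∑ i, lam i = k) (t : ℕ) :
    Sl m lam t ≤ k := by
  rcases le_or_gt m t with h | h
  · rw [Sl_of_le m lam t h, hsum]
  · calc Sl m lam t ≤ Sl m lam m := Sl_mono m lam h.le
    _ = k := by rw [Sl_of_le m lam m le_rfl, hsum]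

/-- `b` as a function of a general "partial sum" function. -/
def Bn (m : ℕ) (S : ℕ → ℕ) (i : ℕ) : ℕ :=
  ((Finset.Icc 1 (m - 1)).filter (fun t => i + 1 ≤ S t)).card

lemma slimB_eq (m k : ℕ) (lam : Fin m → ℕ) (i : Fin k) :
    slimB m k lam i = Bn m (Sl m lam) (i : ℕ) := rfl

lemma Bn_antitone (m : ℕ) (S : ℕ → ℕ) : Antitone (Bn m S) := fun i j h =>
  Finset.card_le_card (by
    intro t ht
    rw [Finset.mem_filter] at *
    exact ⟨ht.1, by omega⟩)

lemma Bn_le (m : ℕ) (S : ℕ → ℕ) (i : ℕ) : Bn m S i ≤ m - 1 := by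
  calc Bn m S i ≤ (Finset.Icc 1 (m - 1)).card := Finset.card_filter_le _ _
  _ = m - 1 := by rw [Nat.card_Icc]; omega

lemma Bn_eq_zero (m k : ℕ) (S : ℕ → ℕ) (hS : ∀ t, S t ≤ k) (i : ℕ) (hi : k ≤ i) :
    Bn m S i = 0 := by
  rw [Bn, Finset.card_eq_zero, Finset.filter_eq_empty_iff]
  intro t _
  have := hS t
  omega

/-- Key equivalence A: for monotone `S` and `t ∈ [1, m-1]`,
`S t ≥ i+1` iff `b_i ≥ m - t`. -/
lemma iffA (m : ℕ) (S : ℕ → ℕ) (hS : Monotone S) (i t : ℕ)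
    (ht1 : 1 ≤ t) (ht2 : t ≤ m - 1) :
    i + 1 ≤ S t ↔ m - t ≤ Bn m S i := by
  constructor
  · intro h
    have hsub : Finset.Icc t (m - 1) ⊆ (Finset.Icc 1 (m - 1)).filter (fun t' => i + 1 ≤ S t') := by
      intro x hx
      rw [Finset.mem_Icc] at hx
      rw [Finset.mem_filter, Finset.mem_Icc]
      exact ⟨⟨le_trans ht1 hx.1, hx.2⟩, h.trans (hS hx.1)⟩
    have := Finset.card_le_card hsub
    rw [Nat.card_Icc] at this
    unfold Bn
    omega
  · intro h
    by_contra hc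
    push_neg at hc
    have hsub : (Finset.Icc 1 (m - 1)).filter (fun t' => i + 1 ≤ S t') ⊆
        Finset.Icc (t + 1) (m - 1) := by
      intro x hx
      rw [Finset.mem_filter, Finset.mem_Icc] at hx
      rw [Finset.mem_Icc]
      refine ⟨?_, hx.1.2⟩
      by_contra hxt
      push_neg at hxt
      have := hS (show x ≤ t by omega)
      omega
    have := Finset.card_le_card hsub
    rw [Nat.card_Icc] at this
    unfold Bn at h
    omega

/-- Key equivalence B: for an antitone `b` and `i < k`,
`#{i' < k : b i' ≥ c} ≥ i+1` iff `b i ≥ c`. -/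
lemma iffB (k c : ℕ) (b : ℕ → ℕ) (hb : Antitone b) (i : ℕ) (hi : i < k) :
    i + 1 ≤ ((Finset.range k).filter (fun j => c ≤ b j)).card ↔ c ≤ b i := by
  constructor
  · intro h
    by_contra hc
    push_neg at hc
    have hsub : (Finset.range k).filter (fun j => c ≤ b j) ⊆ Finset.range i := by
      intro x hx
      rw [Finset.mem_filter, Finset.mem_range] at hx
      rw [Finset.mem_range]
      by_contra hxi
      push_neg at hxi
      have := hb hxi
      omega
    have := Finset.card_le_card hsub
    rw [Finset.card_range] at this
    omega
  · intro h
    have hsub : Finset.range (i + 1) ⊆ (Finset.range k).filter (fun j => c ≤ b j) := by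
      intro x hx
      rw [Finset.mem_range] at hx
      rw [Finset.mem_filter, Finset.mem_range]
      exact ⟨by omega, h.trans (hb (by omega))⟩
    have := Finset.card_le_card hsub
    rw [Finset.card_range] at this
    omega

/-- Counting lemma: `#{t ∈ [1,m-1] : m - t ≤ c} = c` when `c ≤ m - 1`. -/
lemma countC (m c : ℕ) (hm : 0 < m) (hc : c ≤ m - 1) :
    ((Finset.Icc 1 (m - 1)).filter (fun t => m - t ≤ c)).card = c := by
  have heq : (Finset.Icc 1 (m - 1)).filter (fun t => m - t ≤ c) = Finset.Icc (m - c) (m - 1) := by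
    ext t
    rw [Finset.mem_filter, Finset.mem_Icc, Finset.mem_Icc]
    omega
  rw [heq, Nat.card_Icc]
  omega

lemma countMin (k c : ℕ) : ((Finset.range k).filter (fun i => i + 1 ≤ c)).card = min c k := by
  have heq : (Finset.range k).filter (fun i => i + 1 ≤ c) = Finset.range (min c k) := by
    ext t
    rw [Finset.mem_filter, Finset.mem_range, Finset.mem_range]
    omega
  rw [heq, Finset.card_range]

lemma sum_range_sub_antitone (f : ℕ → ℕ) (hf : Antitone f) (n : ℕ) :
    ∑ i ∈ Finset.range n, (f i - f (i + 1)) = f 0 - f n := by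
  induction n with
  | zero => simp
  | succ n ih =>
    rw [Finset.sum_range_succ, ih]
    have h1 : f n ≤ f 0 := hf (Nat.zero_le n)
    have h2 : f (n + 1) ≤ f n := hf (by omega)
    omega

/-! ### The inverse map -/

/-- `a` extended by zero. -/
def aext (k : ℕ) (a : Fin k → ℕ) (j : ℕ) : ℕ := if h : j < k then a ⟨j, h⟩ else 0

/-- Tail sums of `a`. -/
def bta (k : ℕ) (a : Fin k → ℕ) (i : ℕ) : ℕ := ∑ j ∈ Finset.Ico i k, aext k a j

/-- Reconstructed partial sums. -/
def Tf (m k : ℕ) (a : Fin k → ℕ) (t : ℕ) : ℕ :=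
  ((Finset.range k).filter (fun i => m - t ≤ bta k a i)).card

/-- The inverse map. -/
def Ginv (m k : ℕ) (a : Fin k → ℕ) : Fin m → ℕ :=
  fun t => Tf m k a ((t : ℕ) + 1) - Tf m k a (t : ℕ)

lemma bta_antitone (k : ℕ) (a : Fin k → ℕ) : Antitone (bta k a) := fun i j h =>
  Finset.sum_le_sum_of_subset (Finset.Ico_subset_Ico h le_rfl)

lemma bta_zero (k : ℕ) (a : Fin k → ℕ) : bta k a 0 = ∑ i, a i := by
  rw [bta, ← Finset.range_eq_Ico, ← Fin.sum_univ_eq_sum_range]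
  exact Finset.sum_congr rfl fun i _ => by simp [aext, i.isLt]

lemma bta_succ (k : ℕ) (a : Fin k → ℕ) (i : ℕ) (hi : i < k) :
    bta k a i = aext k a i + bta k a (i + 1) := by
  rw [bta, bta, ← Finset.sum_Ico_consecutive _ (Nat.le_succ i) hi]
  congr 1
  rw [Finset.sum_Ico_succ_top le_rfl, Finset.Ico_self, Finset.sum_empty, zero_add]

lemma bta_of_le (k : ℕ) (a : Fin k → ℕ) (i : ℕ) (hi : k ≤ i) : bta k a i = 0 := by
  rw [bta, Finset.Ico_eq_empty (by omega), Finset.sum_empty]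

lemma Tf_mono (m k : ℕ) (a : Fin k → ℕ) : Monotone (Tf m k a) := fun s t h =>
  Finset.card_le_card (by
    intro i hi
    rw [Finset.mem_filter] at *
    exact ⟨hi.1, by omega⟩)

lemma Tf_le (m k : ℕ) (a : Fin k → ℕ) (t : ℕ) : Tf m k a t ≤ k := by
  calc Tf m k a t ≤ (Finset.range k).card := Finset.card_filter_le _ _
  _ = k := Finset.card_range k

lemma Tf_zero (m k : ℕ) (a : Fin k → ℕ) (hb : ∀ i, bta k a i ≤ m - 1) (hm : 0 < m) :
    Tf m k a 0 = 0 := by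
  rw [Tf, Finset.card_eq_zero, Finset.filter_eq_empty_iff]
  intro i _
  have := hb i
  omega

lemma Tf_m (m k : ℕ) (a : Fin k → ℕ) : Tf m k a m = k := by
  rw [Tf]
  have : (Finset.range k).filter (fun i => m - m ≤ bta k a i) = Finset.range k := by
    apply Finset.filter_true_of_mem
    intro i _
    omega
  rw [this, Finset.card_range]

lemma Sl_Ginv (m k : ℕ) (a : Fin k → ℕ) (hb : ∀ i, bta k a i ≤ m - 1) (hm : 0 < m)
    (t : ℕ) (ht : t ≤ m) : Sl m (Ginv m k a) t = Tf m k a t := by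
  induction t with
  | zero => rw [Sl_zero, Tf_zero m k a hb hm]
  | succ t ih =>
    have htm : t < m := by omega
    rw [Sl_succ m _ t htm, ih (by omega)]
    show Tf m k a t + (Tf m k a (t + 1) - Tf m k a t) = Tf m k a (t + 1)
    have := Tf_mono m k a (show t ≤ t + 1 by omega)
    omega

end SlimAux

open SlimAux Finset in
/-- The map `λ ↦ λ̈` is a bijection from the set of compositions of `k`
into `m` nonnegative parts onto the set of vectors `(a_1,…,a_k)` of nonnegative integers
with `a_1 + ⋯ + a_k ≤ m − 1`. -/
theorem slim_ddot_bijOn (m k : ℕ) (hm : 0 < m) (hk : 0 < k) :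
    Set.BijOn (slimDdot m k)
      {lam : Fin m → ℕ | ∑ i, lam i = k}
      {a : Fin k → ℕ | ∑ i, a i ≤ m - 1} := by
  -- ddot in terms of Bn
  have hddot : ∀ (lam : Fin m → ℕ), (∑ i, lam i = k) → ∀ i : Fin k,
      slimDdot m k lam i = Bn m (Sl m lam) (i : ℕ) - Bn m (Sl m lam) ((i : ℕ) + 1) := by
    intro lam hsum i
    rw [slimDdot, slimB_eq]
    split_ifs with h
    · rw [slimB_eq]
    · rw [Bn_eq_zero m k _ (Sl_le m k lam hsum) ((i : ℕ) + 1) (by omega)]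
  -- Forward MapsTo
  have hmapsF : Set.MapsTo (slimDdot m k)
      {lam : Fin m → ℕ | ∑ i, lam i = k} {a : Fin k → ℕ | ∑ i, a i ≤ m - 1} := by
    intro lam hlam
    simp only [Set.mem_setOf_eq] at *
    have : ∑ i, slimDdot m k lam i
        = ∑ i ∈ Finset.range k, (Bn m (Sl m lam) i - Bn m (Sl m lam) (i + 1)) := by
      rw [← Fin.sum_univ_eq_sum_range]
      exact Finset.sum_congr rfl fun i _ => hddot lam hlam i
    rw [this, sum_range_sub_antitone _ (Bn_antitone m _) k]
    have := Bn_le m (Sl m lam) 0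
    omega
  -- Inverse MapsTo
  have hmapsG : Set.MapsTo (Ginv m k)
      {a : Fin k → ℕ | ∑ i, a i ≤ m - 1} {lam : Fin m → ℕ | ∑ i, lam i = k} := by
    intro a ha
    simp only [Set.mem_setOf_eq] at *
    have hb : ∀ i, bta k a i ≤ m - 1 := by
      intro i
      calc bta k a i ≤ bta k a 0 := bta_antitone k a (Nat.zero_le i)
      _ = ∑ i, a i := bta_zero k a
      _ ≤ m - 1 := ha
    have hmono : Monotone (fun t => Tf m k a t) := Tf_mono m k a
    have : ∑ i, Ginv m k a i = ∑ t ∈ Finset.range m, (Tf m k a (t + 1) - Tf m k a t) := by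
      rw [← Fin.sum_univ_eq_sum_range]
      rfl
    rw [this, Finset.sum_range_tsub hmono, Tf_m, Tf_zero m k a hb hm]
    omega
  -- Right inverse: slimDdot ∘ Ginv = id on target
  have hright : ∀ a : Fin k → ℕ, (∑ i, a i ≤ m - 1) → slimDdot m k (Ginv m k a) = a := by
    intro a ha
    have hb : ∀ i, bta k a i ≤ m - 1 := by
      intro i
      calc bta k a i ≤ bta k a 0 := bta_antitone k a (Nat.zero_le i)
      _ = ∑ i, a i := bta_zero k a
      _ ≤ m - 1 := ha
    -- slimB (Ginv a) i = bta i for i < k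
    have hB : ∀ i : ℕ, i < k → Bn m (Sl m (Ginv m k a)) i = bta k a i := by
      intro i hi
      have hcongr : (Finset.Icc 1 (m - 1)).filter (fun t => i + 1 ≤ Sl m (Ginv m k a) t)
          = (Finset.Icc 1 (m - 1)).filter (fun t => m - t ≤ bta k a i) := by
        apply Finset.filter_congr
        intro t ht
        rw [Finset.mem_Icc] at ht
        rw [Sl_Ginv m k a hb hm t (by omega)]
        rw [Tf]
        exact iffB k (m - t) (bta k a) (bta_antitone k a) i hi
      rw [Bn, hcongr, countC m (bta k a i) hm (hb i)]
    funext i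
    have hsum : ∑ j, Ginv m k a j = k := hmapsG (Set.mem_setOf_eq ▸ ha)
    rw [hddot (Ginv m k a) hsum i, hB (i : ℕ) i.isLt]
    have hbs := bta_succ k a (i : ℕ) i.isLt
    have haext : aext k a (i : ℕ) = a i := by simp [aext, i.isLt]
    rcases Nat.lt_or_ge ((i : ℕ) + 1) k with h | h
    · rw [hB ((i : ℕ) + 1) h]
      omega
    · rw [Bn_eq_zero m k _ (Sl_le m k (Ginv m k a) hsum) ((i : ℕ) + 1) h]
      rw [bta_of_le k a ((i : ℕ) + 1) h] at hbs
      omega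
  -- Left inverse: Ginv ∘ slimDdot = id on source
  have hleft : ∀ lam : Fin m → ℕ, (∑ i, lam i = k) → Ginv m k (slimDdot m k lam) = lam := by
    intro lam hsum
    set a := slimDdot m k lam with ha
    set B := Bn m (Sl m lam) with hBdef
    have hBanti : Antitone B := Bn_antitone m _
    have hBk : ∀ j, k ≤ j → B j = 0 := fun j hj => Bn_eq_zero m k _ (Sl_le m k lam hsum) j hj
    -- aext = B j - B (j+1) for all j
    have haext : ∀ j : ℕ, aext k a j = B j - B (j + 1) := by
      intro j
      rcases Nat.lt_or_ge j k with h | h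
      · have : aext k a j = a ⟨j, h⟩ := by simp [aext, h]
        rw [this, ha, hddot lam hsum ⟨j, h⟩]
      · rw [aext, dif_neg (by omega), hBk j h]
        have := hBanti (Nat.le_succ j)
        omega
    -- bta = B
    have hbta : ∀ i : ℕ, bta k a i = B i := by
      intro i
      rcases Nat.lt_or_ge k i with h | h
      · rw [bta_of_le k a i h.le, hBk i h.le]
      · have hcast : (bta k a i : ℤ) = (B i : ℤ) := by
          rw [bta, Nat.cast_sum]
          have hterm : ∀ j ∈ Finset.Ico i k, (aext k a j : ℤ) = (B j : ℤ) - (B (j + 1) : ℤ) := by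
            intro j _
            rw [haext j, Nat.cast_sub (hBanti (Nat.le_succ j))]
          rw [Finset.sum_congr rfl hterm, Finset.sum_Ico_eq_sub _ h,
            Finset.sum_range_sub' (fun j => (B j : ℤ)) k,
            Finset.sum_range_sub' (fun j => (B j : ℤ)) i, hBk k le_rfl]
          push_cast
          ring
        exact_mod_cast hcast
    have hb : ∀ i, bta k a i ≤ m - 1 := fun i => (hbta i) ▸ Bn_le m (Sl m lam) i
    -- Tf = Sl lam on [0, m]
    have hTf : ∀ t : ℕ, t ≤ m → Tf m k a t = Sl m lam t := by
      intro t ht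
      rcases Nat.eq_zero_or_pos t with rfl | htpos
      · rw [Tf_zero m k a hb hm, Sl_zero]
      rcases Nat.lt_or_ge t m with htm | htm
      · -- 1 ≤ t ≤ m - 1
        have hcongr : (Finset.range k).filter (fun i => m - t ≤ bta k a i)
            = (Finset.range k).filter (fun i => i + 1 ≤ Sl m lam t) := by
          apply Finset.filter_congr
          intro i hi
          rw [Finset.mem_range] at hi
          rw [hbta i]
          exact ((iffA m (Sl m lam) (Sl_mono m lam) i t htpos (by omega)).symm)
        rw [Tf, hcongr, countMin k (Sl m lam t)]
        have := Sl_le m k lam hsum t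
        omega
      · have : t = m := by omega
        rw [this, Tf_m, Sl_of_le m lam m le_rfl, hsum]
    funext t
    show Tf m k a ((t : ℕ) + 1) - Tf m k a (t : ℕ) = lam t
    rw [hTf ((t : ℕ) + 1) t.isLt, hTf (t : ℕ) (le_of_lt t.isLt),
      Sl_succ m lam (t : ℕ) t.isLt]
    have heta : lam ⟨(t : ℕ), t.isLt⟩ = lam t := rfl
    rw [heta]
    omega
  exact Set.InvOn.bijOn ⟨fun lam hlam => hleft lam hlam, fun a ha => hright a ha⟩ hmapsF hmapsG
end

section
/- In the Ariki–Koike algebra H_u(r), for 1 ≤ i ≤ r−1 and a ∈ ℕ^r, one has: L^a T_i = T_i L^{a·s_i} if a_i = a_{i+1}; L^a T_i = T_i L^{a·s_i} + (q−1) Σ_{t=1}^{a_{i+1}−a_i} L^{a·s_i − tα_i} if a_i < a_{i+1}; and L^a T_i = T_i L^{a·s_i} + (1−q) Σ_{t=0}^{a_i−a_{i+1}−1} L^{a·s_i + tα_i} if a_i > a_{i+1}. -/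
/-- The monomial `L^a = L_1^{a_1} ⋯ L_r^{a_r}`. -/
def akLmon {H : Type} [Ring H] (L : ℕ → H) (r : ℕ) (a : ℕ → ℕ) : H :=
  ((List.range r).map (fun j => L (j + 1) ^ a (j + 1))).prod

/-- The exponent vector `a·s_i` (entries `i` and `i+1` of `a` swapped). -/
def akSwap (a : ℕ → ℕ) (i : ℕ) : ℕ → ℕ :=
  fun j => if j = i then a (i + 1) else if j = i + 1 then a i else a j

/-- The exponent vector `a·s_i − t·α_i` (valid when `a_i < a_{i+1}`, `1 ≤ t ≤ a_{i+1} − a_i`). -/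
def akSwapSub (a : ℕ → ℕ) (i t : ℕ) : ℕ → ℕ :=
  fun j => if j = i then a (i + 1) - t else if j = i + 1 then a i + t else a j

/-- The exponent vector `a·s_i + t·α_i` (valid when `a_i > a_{i+1}`, `0 ≤ t ≤ a_i − a_{i+1} − 1`). -/
def akSwapAdd (a : ℕ → ℕ) (i t : ℕ) : ℕ → ℕ :=
  fun j => if j = i then a (i + 1) + t else if j = i + 1 then a i - t else a j

private def akPre {H : Type} [Ring H] (L : ℕ → H) (i : ℕ) (b : ℕ → ℕ) : H :=
  ((List.range (i-1)).map (fun j => L (j+1) ^ b (j+1))).prod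

private def akSuf {H : Type} [Ring H] (L : ℕ → H) (r i : ℕ) (b : ℕ → ℕ) : H :=
  ((List.range (r-(i+1))).map (fun j => L (i+1+j+1) ^ b (i+1+j+1))).prod

private lemma akSplit {H : Type} [Ring H] (L : ℕ → H) (r i : ℕ) (hi1 : 1 ≤ i)
    (hir : i + 1 ≤ r) (b : ℕ → ℕ) :
    akLmon L r b
      = akPre L i b * ((L i ^ b i * L (i+1) ^ b (i+1)) * akSuf L r i b) := by
  unfold akLmon akPre akSuf
  have h1 : r = (i-1) + 2 + (r - (i+1)) := by omega
  rw [h1, List.range_add, List.range_add]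
  simp only [List.map_append, List.prod_append, List.map_map]
  have h2 : List.range 2 = [0, 1] := rfl
  rw [h2]
  simp only [List.map_cons, List.map_nil, List.prod_cons, List.prod_nil, Function.comp]
  have e0 : i - 1 + 0 + 1 = i := by omega
  have e1 : i - 1 + 1 + 1 = i + 1 := by omega
  rw [e0, e1, mul_one]
  rw [mul_assoc]
  congr 1
  congr 1
  rw [show i + 1 + (r - (i+1)) - (i+1) = r - (i+1) from by omega]
  refine congrArg List.prod (List.map_congr_left fun j hj => ?_)
  simp only [Function.comp]

private lemma icc_range {H : Type} [Ring H] (F : ℕ → H) (d : ℕ) :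
    ∑ t ∈ Finset.Icc 1 d, F t = ∑ t ∈ Finset.range d, F (t+1) := by
  induction d with
  | zero => simp
  | succ d ih =>
    rw [Finset.sum_Icc_succ_top (by omega), ih, Finset.sum_range_succ]

/-- In the Ariki–Koike algebra, for `1 ≤ i ≤ r−1` and `a ∈ ℕ^r`:
`L^a T_i = T_i L^{a·s_i}` if `a_i = a_{i+1}`;
`L^a T_i = T_i L^{a·s_i} + (q−1) Σ_{t=1}^{a_{i+1}−a_i} L^{a·s_i − tα_i}` if `a_i < a_{i+1}`;
`L^a T_i = T_i L^{a·s_i} + (1−q) Σ_{t=0}^{a_i−a_{i+1}−1} L^{a·s_i + tα_i}` if `a_i > a_{i+1}`. -/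
theorem ariki_koike_Lmon_T_commutation
    (R : Type) [CommRing R] (q : R) (hq : IsUnit q) (m r : ℕ) (hm : 0 < m)
    (u : Fin m → R)
    (H : Type) [Ring H] [Algebra R H]
    (T L : ℕ → H)
    (hquad : ∀ i, 1 ≤ i → i ≤ r - 1 → (T i + 1) * (T i - algebraMap R H q) = 0)
    (hbraid : ∀ i, 1 ≤ i → i + 1 ≤ r - 1 → T i * T (i + 1) * T i = T (i + 1) * T i * T (i + 1))
    (hTT : ∀ i j, 1 ≤ i → j ≤ r - 1 → i + 1 < j → T i * T j = T j * T i)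
    (hLL : ∀ i j, 1 ≤ i → i ≤ r → 1 ≤ j → j ≤ r → L i * L j = L j * L i)
    (hcyclo : (List.ofFn (fun k : Fin m => L 1 - algebraMap R H (u k))).prod = 0)
    (hTLT : ∀ i, 1 ≤ i → i ≤ r - 1 → T i * L i * T i = algebraMap R H q * L (i + 1))
    (hLT : ∀ i j, 1 ≤ i → i ≤ r - 1 → 1 ≤ j → j ≤ r → j ≠ i → j ≠ i + 1 →
      L j * T i = T i * L j) :
    ∀ (i : ℕ), 1 ≤ i → i ≤ r - 1 → ∀ a : ℕ → ℕ,
      (a i = a (i + 1) → akLmon L r a * T i = T i * akLmon L r (akSwap a i)) ∧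
      (a i < a (i + 1) →
        akLmon L r a * T i = T i * akLmon L r (akSwap a i) +
          (q - 1) • ∑ t ∈ Finset.Icc 1 (a (i + 1) - a i), akLmon L r (akSwapSub a i t)) ∧
      (a i > a (i + 1) →
        akLmon L r a * T i = T i * akLmon L r (akSwap a i) +
          (1 - q) • ∑ t ∈ Finset.range (a i - a (i + 1)), akLmon L r (akSwapAdd a i t)) := by
  intro i hi1 hi2
  have hir : i + 1 ≤ r := by omega
  set Q : H := algebraMap R H q with hQ
  have hQc : ∀ x : H, Q * x = x * Q := fun x => Algebra.commutes q x
  have hc2 : ∀ x : H, x * Q = Q * x := fun x => (hQc x).symm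
  have hc3 : ∀ x y : H, x * (Q * y) = Q * (x * y) := fun x y => by
    rw [← mul_assoc, ← hQc x, mul_assoc]
  have hcan : ∀ x y : H, Q * x = Q * y → x = y :=
    fun x y h => (hq.map (algebraMap R H)).mul_left_cancel h
  -- quadratic relation
  have hsq : T i * T i = Q * T i - T i + Q := by
    have h := hquad i hi1 hi2
    have h2 : T i * T i - T i * Q + T i - Q = 0 := by
      rw [← h]; noncomm_ring
    rw [hc2 (T i)] at h2
    calc T i * T i = T i * T i - Q * T i + T i - Q + (Q * T i - T i + Q) := by abel
    _ = Q * T i - T i + Q := by rw [h2, zero_add]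
  have h0 : T i * (L i * T i) = Q * L (i + 1) := by
    rw [← mul_assoc]; exact hTLT i hi1 hi2
  -- L_i T_i = T_i L_{i+1} + (1-Q) L_{i+1}
  have hLiT : L i * T i = T i * L (i + 1) + (1 - Q) * L (i + 1) := by
    apply hcan
    calc Q * (L i * T i)
        = (Q * T i - T i + Q) * (L i * T i) - Q * (T i * (L i * T i))
            + T i * (L i * T i) := by noncomm_ring
      _ = T i * T i * (L i * T i) - Q * (Q * L (i+1)) + Q * L (i+1) := by rw [← hsq, h0]
      _ = Q * (T i * L (i+1)) - Q * (Q * L (i+1)) + Q * L (i+1) := by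
          rw [mul_assoc, h0, hc3]
      _ = Q * (T i * L (i + 1) + (1 - Q) * L (i + 1)) := by noncomm_ring
  -- L_{i+1} T_i = T_i L_i + (Q-1) L_{i+1}
  have hLi1T : L (i + 1) * T i = T i * L i + (Q - 1) * L (i + 1) := by
    apply hcan
    have h1 : T i * L i * (T i * T i) = Q * (L (i + 1) * T i) := by
      rw [← mul_assoc, hTLT i hi1 hi2, mul_assoc]
    rw [hsq] at h1
    rw [← h1]
    calc T i * L i * (Q * T i - T i + Q)
        = (T i * L i) * (Q * T i) - (T i * L i * T i) + (T i * L i) * Q := by noncomm_ring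
      _ = Q * (T i * L i * T i) - (T i * L i * T i) + Q * (T i * L i) := by
          rw [hc3, hc2]
      _ = Q * (Q * L (i+1)) - Q * L (i+1) + Q * (T i * L i) := by rw [hTLT i hi1 hi2]
      _ = Q * (T i * L i + (Q - 1) * L (i + 1)) := by noncomm_ring
  -- smul versions
  have hsm : ∀ (c : R) (x : H), c • x = algebraMap R H c * x := fun c x => Algebra.smul_def c x
  have hLiT' : L i * T i = T i * L (i + 1) + (1 - q) • L (i + 1) := by
    rw [hsm, map_sub, map_one]; exact hLiT
  have hLi1T' : L (i + 1) * T i = T i * L i + (q - 1) • L (i + 1) := by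
    rw [hsm, map_sub, map_one]; exact hLi1T
  have hTLi : T i * L i = L (i + 1) * T i - (q - 1) • L (i + 1) := by
    rw [hLi1T']; abel
  have hTLi1 : T i * L (i + 1) = L i * T i - (1 - q) • L (i + 1) := by
    rw [hLiT']; abel
  -- commuting L's
  have cLL : Commute (L i) (L (i + 1)) := hLL i (i+1) hi1 (by omega) (by omega) hir
  have hprodT : T i * (L i * L (i + 1)) = (L i * L (i + 1)) * T i := by
    calc T i * (L i * L (i + 1)) = (T i * L i) * L (i+1) := by rw [mul_assoc]
      _ = L (i+1) * (T i * L (i+1)) - (q-1) • (L (i+1) * L (i+1)) := by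
          rw [hTLi, sub_mul, smul_mul_assoc, mul_assoc]
      _ = L (i+1) * (L i * T i) - (1-q) • (L (i+1) * L (i+1))
            - (q-1) • (L (i+1) * L (i+1)) := by
          rw [hTLi1, mul_sub, mul_smul_comm]
      _ = L (i+1) * (L i * T i) := by
          rw [sub_sub, ← add_smul, show (1-q)+(q-1) = 0 by ring, zero_smul, sub_zero]
      _ = (L i * L (i + 1)) * T i := by rw [← mul_assoc, ← cLL.eq, mul_assoc]
  -- positive power-sum lemma
  have Kpos : ∀ n : ℕ, L (i+1) ^ n * T i
      = T i * L i ^ n + (q - 1) • ∑ t ∈ Finset.range n, L i ^ (n - 1 - t) * L (i+1) ^ (t+1) := by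
    intro n
    induction n with
    | zero => simp
    | succ n ih =>
      calc L (i+1) ^ (n+1) * T i = L (i+1) * (L (i+1) ^ n * T i) := by
            rw [pow_succ', mul_assoc]
        _ = (L (i+1) * T i) * L i ^ n
              + (q-1) • ∑ t ∈ Finset.range n, L (i+1) * (L i ^ (n - 1 - t) * L (i+1) ^ (t+1)) := by
            rw [ih, mul_add, mul_smul_comm, ← mul_assoc, Finset.mul_sum]
        _ = T i * L i ^ (n+1) + (q-1) • (L i ^ n * L (i+1)
              + ∑ t ∈ Finset.range n, L i ^ (n - 1 - t) * L (i+1) ^ (t+2)) := by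
            rw [hLi1T', add_mul, smul_mul_assoc, mul_assoc, ← pow_succ', smul_add, add_assoc]
            congr 2
            · exact congrArg _ (cLL.symm.pow_right n).eq
            · refine congrArg _ (Finset.sum_congr rfl fun t _ => ?_)
              rw [← mul_assoc, (cLL.symm.pow_right (n-1-t)).eq, mul_assoc, ← pow_succ']
        _ = T i * L i ^ (n+1)
              + (q-1) • ∑ t ∈ Finset.range (n+1), L i ^ (n - t) * L (i+1) ^ (t+1) := by
            have e1 : ∑ t ∈ Finset.range (n+1), L i ^ (n - t) * L (i+1) ^ (t+1)
                = L i ^ n * L (i+1)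
                  + ∑ t ∈ Finset.range n, L i ^ (n-1-t) * L (i+1) ^ (t+2) := by
              rw [Finset.sum_range_succ', add_comm]
              congr 1
              · simp
              · exact Finset.sum_congr rfl fun t _ => by
                  congr 2 <;> omega
            rw [e1]
  -- negative power-sum lemma
  have Kneg : ∀ n : ℕ, L i ^ n * T i
      = T i * L (i+1) ^ n + (1 - q) • ∑ t ∈ Finset.range n, L i ^ t * L (i+1) ^ (n - t) := by
    intro n
    induction n with
    | zero => simp
    | succ n ih =>
      calc L i ^ (n+1) * T i = L i * (L i ^ n * T i) := by
            rw [pow_succ', mul_assoc]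
        _ = (L i * T i) * L (i+1) ^ n
              + (1-q) • ∑ t ∈ Finset.range n, L i * (L i ^ t * L (i+1) ^ (n - t)) := by
            rw [ih, mul_add, mul_smul_comm, ← mul_assoc, Finset.mul_sum]
        _ = T i * L (i+1) ^ (n+1) + (1-q) • (L (i+1) ^ (n+1)
              + ∑ t ∈ Finset.range n, L i ^ (t+1) * L (i+1) ^ (n - t)) := by
            rw [hLiT', add_mul, smul_mul_assoc, mul_assoc, ← pow_succ', smul_add, add_assoc]
            congr 2
            all_goals try rw [← pow_succ']
            all_goals
              refine congrArg _ (Finset.sum_congr rfl fun t _ => ?_)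
              rw [← mul_assoc, ← pow_succ']
        _ = T i * L (i+1) ^ (n+1)
              + (1-q) • ∑ t ∈ Finset.range (n+1), L i ^ t * L (i+1) ^ (n + 1 - t) := by
            have e1 : ∑ t ∈ Finset.range (n+1), L i ^ t * L (i+1) ^ (n + 1 - t)
                = L (i+1) ^ (n+1)
                  + ∑ t ∈ Finset.range n, L i ^ (t+1) * L (i+1) ^ (n - t) := by
              rw [Finset.sum_range_succ', add_comm]
              congr 1
              · simp
              · exact Finset.sum_congr rfl fun t _ => by
                  congr 2
                  omega
            rw [e1]
  -- commutation of T i with balanced products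
  have cPT : Commute (T i) (L i * L (i+1)) := hprodT
  have hPcT : ∀ c : ℕ, (L i ^ c * L (i+1) ^ c) * T i = T i * (L i ^ c * L (i+1) ^ c) := by
    intro c
    rw [← cLL.mul_pow]
    exact ((cPT.pow_right c).symm.eq)
  -- mixing lemmas
  have hmix0 : ∀ c k : ℕ, (L i ^ c * L (i+1) ^ c) * L i ^ k = L i ^ (c+k) * L (i+1) ^ c := by
    intro c k
    rw [mul_assoc, (cLL.symm.pow_pow c k).eq, ← mul_assoc, ← pow_add]
  have hmix1 : ∀ c k : ℕ, (L i ^ c * L (i+1) ^ c) * L (i+1) ^ k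
      = L i ^ c * L (i+1) ^ (c+k) := by
    intro c k
    rw [mul_assoc, ← pow_add]
  have hmix : ∀ c k s : ℕ, (L i ^ c * L (i+1) ^ c) * (L i ^ k * L (i+1) ^ s)
      = L i ^ (c+k) * L (i+1) ^ (c+s) := by
    intro c k s
    rw [← mul_assoc, hmix0, mul_assoc, ← pow_add]
  -- two-variable lemmas
  have K2pos : ∀ c d : ℕ, (L i ^ c * L (i+1) ^ (c+d)) * T i
      = T i * (L i ^ (c+d) * L (i+1) ^ c)
        + (q-1) • ∑ t ∈ Finset.range d, L i ^ (c+(d-1-t)) * L (i+1) ^ (c+(t+1)) := by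
    intro c d
    calc (L i ^ c * L (i+1) ^ (c+d)) * T i
        = (L i ^ c * L (i+1) ^ c) * (L (i+1) ^ d * T i) := by
          rw [pow_add, ← mul_assoc, mul_assoc]
      _ = (L i ^ c * L (i+1) ^ c) * (T i * L i ^ d)
            + (q-1) • ∑ t ∈ Finset.range d,
                (L i ^ c * L (i+1) ^ c) * (L i ^ (d-1-t) * L (i+1) ^ (t+1)) := by
          rw [Kpos d, mul_add, mul_smul_comm, Finset.mul_sum]
      _ = T i * (L i ^ (c+d) * L (i+1) ^ c)
            + (q-1) • ∑ t ∈ Finset.range d, L i ^ (c+(d-1-t)) * L (i+1) ^ (c+(t+1)) := by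
          congr 1
          · rw [← mul_assoc, hPcT, mul_assoc, hmix0]
          · exact congrArg _ (Finset.sum_congr rfl fun t _ => hmix c _ _)
  have K2neg : ∀ c d : ℕ, (L i ^ (c+d) * L (i+1) ^ c) * T i
      = T i * (L i ^ c * L (i+1) ^ (c+d))
        + (1-q) • ∑ t ∈ Finset.range d, L i ^ (c+t) * L (i+1) ^ (c+(d-t)) := by
    intro c d
    calc (L i ^ (c+d) * L (i+1) ^ c) * T i
        = (L i ^ c * L (i+1) ^ c) * (L i ^ d * T i) := by
          rw [← hmix0, mul_assoc]
      _ = (L i ^ c * L (i+1) ^ c) * (T i * L (i+1) ^ d)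
            + (1-q) • ∑ t ∈ Finset.range d,
                (L i ^ c * L (i+1) ^ c) * (L i ^ t * L (i+1) ^ (d-t)) := by
          rw [Kneg d, mul_add, mul_smul_comm, Finset.mul_sum]
      _ = T i * (L i ^ c * L (i+1) ^ (c+d))
            + (1-q) • ∑ t ∈ Finset.range d, L i ^ (c+t) * L (i+1) ^ (c+(d-t)) := by
          congr 1
          · rw [← mul_assoc, hPcT, mul_assoc, hmix1]
          · exact congrArg _ (Finset.sum_congr rfl fun t _ => hmix c _ _)
  have hsplit : ∀ b : ℕ → ℕ, akLmon L r b
      = akPre L i b * ((L i ^ b i * L (i+1) ^ b (i+1)) * akSuf L r i b) :=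
    fun b => akSplit L r i hi1 hir b
  have hsplit2 := hsplit
  -- reduction of full monomials to the two-variable case
  have hPreT : ∀ b : ℕ → ℕ, Commute (T i) (akPre L i b) := by
    intro b
    apply Commute.list_prod_right
    intro x hx
    obtain ⟨j, hj, rfl⟩ := List.mem_map.1 hx
    have hj' : j < i - 1 := List.mem_range.1 hj
    exact Commute.pow_right
      ((hLT i (j+1) hi1 hi2 (by omega) (by omega) (by omega) (by omega)).symm) _
  have hSufT : ∀ b : ℕ → ℕ, Commute (T i) (akSuf L r i b) := by
    intro b
    apply Commute.list_prod_right
    intro x hx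
    obtain ⟨j, hj, rfl⟩ := List.mem_map.1 hx
    have hj' : j < r - (i+1) := List.mem_range.1 hj
    exact Commute.pow_right
      ((hLT i (i+1+j+1) hi1 hi2 (by omega) (by omega) (by omega) (by omega)).symm) _
  have hPreEq : ∀ b b' : ℕ → ℕ, (∀ j, j ≠ i → j ≠ i + 1 → b' j = b j) →
      akPre L i b' = akPre L i b := by
    intro b b' h
    refine congrArg List.prod (List.map_congr_left fun j hj => ?_)
    have hj' : j < i - 1 := List.mem_range.1 hj
    rw [h (j+1) (by omega) (by omega)]
  have hSufEq : ∀ b b' : ℕ → ℕ, (∀ j, j ≠ i → j ≠ i + 1 → b' j = b j) →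
      akSuf L r i b' = akSuf L r i b := by
    intro b b' h
    refine congrArg List.prod (List.map_congr_left fun j hj => ?_)
    have hj' : j < r - (i+1) := List.mem_range.1 hj
    rw [h (i+1+j+1) (by omega) (by omega)]
  have lift : ∀ (a a' : ℕ → ℕ) (c : R) (s : Finset ℕ) (g : ℕ → ℕ → ℕ),
      (∀ j, j ≠ i → j ≠ i + 1 → a' j = a j) →
      (∀ t ∈ s, ∀ j, j ≠ i → j ≠ i + 1 → g t j = a j) →
      ((L i ^ a i * L (i+1) ^ a (i+1)) * T i
        = T i * (L i ^ a' i * L (i+1) ^ a' (i+1))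
          + c • ∑ t ∈ s, L i ^ g t i * L (i+1) ^ g t (i+1)) →
      akLmon L r a * T i = T i * akLmon L r a' + c • ∑ t ∈ s, akLmon L r (g t) := by
    intro a a' c s g ha' hg key
    have hS : akSuf L r i a * T i = T i * akSuf L r i a := (hSufT a).eq.symm
    have hP : akPre L i a * T i = T i * akPre L i a := (hPreT a).eq.symm
    rw [hsplit a, hsplit a']
    rw [mul_assoc, mul_assoc, hS, ← mul_assoc (L i ^ a i * L (i+1) ^ a (i+1)), key]
    rw [add_mul, smul_mul_assoc, mul_add, mul_smul_comm]
    rw [show akPre L i a * (T i * (L i ^ a' i * L (i+1) ^ a' (i+1)) * akSuf L r i a)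
        = T i * (akPre L i a * (L i ^ a' i * L (i+1) ^ a' (i+1) * akSuf L r i a)) from by
      rw [← mul_assoc, ← mul_assoc, hP, mul_assoc, mul_assoc]]
    congr 1
    · rw [← hPreEq a a' ha', ← hSufEq a a' ha', ← hsplit a']
    · congr 1
      rw [Finset.sum_mul, Finset.mul_sum]
      refine Finset.sum_congr rfl fun t ht => ?_
      rw [hsplit (g t), hPreEq a (g t) (hg t ht), hSufEq a (g t) (hg t ht), mul_assoc]
  clear hsplit2
  intro a
  have sw1 : akSwap a i i = a (i + 1) := by simp [akSwap]
  have sw2 : akSwap a i (i + 1) = a i := by simp [akSwap]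
  have swo : ∀ j, j ≠ i → j ≠ i + 1 → akSwap a i j = a j := by
    intro j h1 h2; simp [akSwap, h1, h2]
  refine ⟨?_, ?_, ?_⟩
  · -- equal case
    intro heq
    have key : (L i ^ a i * L (i+1) ^ a (i+1)) * T i
        = T i * (L i ^ akSwap a i i * L (i+1) ^ akSwap a i (i+1))
          + (0:R) • ∑ t ∈ (∅ : Finset ℕ), L i ^ a i * L (i+1) ^ a i := by
      rw [sw1, sw2, ← heq]
      simpa using hPcT (a i)
    have := lift a (akSwap a i) 0 ∅ (fun _ => a) swo (by simp) key
    simpa using this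
  · -- a i < a (i+1)
    intro hlt
    have sb1 : ∀ t, akSwapSub a i t i = a (i + 1) - t := by intro t; simp [akSwapSub]
    have sb2 : ∀ t, akSwapSub a i t (i + 1) = a i + t := by intro t; simp [akSwapSub]
    have sbo : ∀ t, t ∈ Finset.Icc 1 (a (i+1) - a i) →
        ∀ j, j ≠ i → j ≠ i + 1 → akSwapSub a i t j = a j := by
      intro t _ j h1 h2; simp [akSwapSub, h1, h2]
    have key : (L i ^ a i * L (i+1) ^ a (i+1)) * T i
        = T i * (L i ^ akSwap a i i * L (i+1) ^ akSwap a i (i+1))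
          + (q - 1) • ∑ t ∈ Finset.Icc 1 (a (i+1) - a i),
              L i ^ akSwapSub a i t i * L (i+1) ^ akSwapSub a i t (i+1) := by
      have h2 := K2pos (a i) (a (i+1) - a i)
      rw [show a i + (a (i+1) - a i) = a (i+1) from by omega] at h2
      rw [sw1, sw2, h2]
      congr 1
      refine congrArg _ ?_
      rw [icc_range]
      refine Finset.sum_congr rfl fun t ht => ?_
      have htd : t < a (i+1) - a i := Finset.mem_range.1 ht
      rw [sb1, sb2, show a i + (a (i+1) - a i - 1 - t) = a (i+1) - (t+1) from by omega]
    exact lift a (akSwap a i) (q-1) (Finset.Icc 1 (a (i+1) - a i)) (akSwapSub a i)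
      swo sbo key
  · -- a i > a (i+1)
    intro hgt
    have sb1 : ∀ t, akSwapAdd a i t i = a (i + 1) + t := by intro t; simp [akSwapAdd]
    have sb2 : ∀ t, akSwapAdd a i t (i + 1) = a i - t := by intro t; simp [akSwapAdd]
    have sbo : ∀ t, t ∈ Finset.range (a i - a (i+1)) →
        ∀ j, j ≠ i → j ≠ i + 1 → akSwapAdd a i t j = a j := by
      intro t _ j h1 h2; simp [akSwapAdd, h1, h2]
    have key : (L i ^ a i * L (i+1) ^ a (i+1)) * T i
        = T i * (L i ^ akSwap a i i * L (i+1) ^ akSwap a i (i+1))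
          + (1 - q) • ∑ t ∈ Finset.range (a i - a (i+1)),
              L i ^ akSwapAdd a i t i * L (i+1) ^ akSwapAdd a i t (i+1) := by
      have h2 := K2neg (a (i+1)) (a i - a (i+1))
      rw [show a (i+1) + (a i - a (i+1)) = a i from by omega] at h2
      rw [sw1, sw2, h2]
      congr 1
      refine congrArg _ ?_
      refine Finset.sum_congr rfl fun t ht => ?_
      have htd : t < a i - a (i+1) := Finset.mem_range.1 ht
      rw [sb1, sb2, show a (i+1) + (a i - a (i+1) - t) = a i - t from by omega]
    exact lift a (akSwap a i) (1-q) (Finset.range (a i - a (i+1))) (akSwapAdd a i)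
      swo sbo key
end

section
/- In the Ariki–Koike algebra H_u(r), each elementary symmetric polynomial σ_j in the Jucys–Murphy elements L_1,…,L_r commutes with every generator T_i (1 ≤ i ≤ r−1). -/
/-- The `j`-th elementary symmetric polynomial
`σ_j = Σ_{1 ≤ k_1 < ⋯ < k_j ≤ r} L_{k_1} ⋯ L_{k_j}` in `L_1, …, L_r`. -/
def akElemSym {H : Type} [Ring H] (L : ℕ → H) (r j : ℕ) : H :=
  ∑ s ∈ Finset.powersetCard j (Finset.Icc 1 r), ((s.sort (· ≤ ·)).map L).prod

lemma akElemSym_zero {H : Type} [Ring H] (L : ℕ → H) (r : ℕ) : akElemSym L r 0 = 1 := by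
  simp [akElemSym, Finset.powersetCard_zero]

lemma sort_insert_max {x : ℕ} {s : Finset ℕ} (h : ∀ b ∈ s, b ≤ x) (hx : x ∉ s) :
    (insert x s).sort (· ≤ ·) = s.sort (· ≤ ·) ++ [x] := by
  have h1 : ((insert x s).sort (· ≤ ·) : List ℕ).Perm (x :: s.sort (· ≤ ·)) := by
    apply Multiset.coe_eq_coe.mp
    rw [Finset.sort_eq, ← Multiset.cons_coe, Finset.sort_eq,
      Finset.insert_val_of_notMem hx]
  have hperm := h1.trans (List.perm_append_singleton _ _).symm
  have hs2 : (s.sort (· ≤ ·) ++ [x]).Pairwise (· ≤ ·) := by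
    rw [List.pairwise_append]
    exact ⟨Finset.pairwise_sort _ _, List.pairwise_singleton _ x,
      fun a ha b hb => by
        rw [List.mem_singleton] at hb
        exact hb ▸ h a ((Finset.mem_sort _).mp ha)⟩
  exact List.Perm.eq_of_pairwise' (Finset.pairwise_sort _ _) hs2 hperm

lemma akElemSym_succ {H : Type} [Ring H] (L : ℕ → H) (n j : ℕ) :
    akElemSym L (n+1) (j+1) = akElemSym L n (j+1) + akElemSym L n j * L (n+1) := by
  unfold akElemSym
  have hni : n + 1 ∉ Finset.Icc 1 n := by simp
  have hIcc : Finset.Icc 1 (n+1) = insert (n+1) (Finset.Icc 1 n) := by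
    ext k; simp only [Finset.mem_Icc, Finset.mem_insert]; omega
  rw [hIcc, Finset.powersetCard_succ_insert hni, Finset.sum_union]
  · congr 1
    rw [Finset.sum_image, Finset.sum_mul]
    · refine Finset.sum_congr rfl fun t ht => ?_
      have hts : t ⊆ Finset.Icc 1 n := (Finset.mem_powersetCard.mp ht).1
      have hnt : n + 1 ∉ t := fun hh => hni (hts hh)
      rw [sort_insert_max (fun b hb => by
        have := hts hb; simp only [Finset.mem_Icc] at this; omega) hnt]
      rw [List.map_append, List.prod_append]
      simp
    · intro a ha b hb hab
      have hna : n + 1 ∉ a := fun hh => hni ((Finset.mem_powersetCard.mp ha).1 hh)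
      have hnb : n + 1 ∉ b := fun hh => hni ((Finset.mem_powersetCard.mp hb).1 hh)
      have := congrArg (fun t => Finset.erase t (n+1)) hab
      simpa [Finset.erase_insert, hna, hnb] using this
  · rw [Finset.disjoint_left]
    intro a ha hb
    have hna : n + 1 ∉ a := fun hh => hni ((Finset.mem_powersetCard.mp ha).1 hh)
    obtain ⟨t, _, rfl⟩ := Finset.mem_image.mp hb
    exact hna (Finset.mem_insert_self _ _)

lemma commute_akElemSym {H : Type} [Ring H] (L : ℕ → H) (T : H) (n j : ℕ)
    (hT : ∀ k, k ∈ Finset.Icc 1 n → Commute T (L k)) :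
    Commute T (akElemSym L n j) := by
  unfold akElemSym
  refine Commute.sum_right _ _ _ fun s hs => ?_
  refine Commute.list_prod_right _ _ fun x hx => ?_
  obtain ⟨k, hk, rfl⟩ := List.mem_map.mp hx
  exact hT k ((Finset.mem_powersetCard.mp hs).1 ((Finset.mem_sort _).mp hk))

/-- In the Ariki–Koike algebra `H_u(r)`, each elementary symmetric
polynomial `σ_j` in the Jucys–Murphy elements `L_1,…,L_r` commutes with every
generator `T_i` (`1 ≤ i ≤ r−1`). -/
theorem ariki_koike_elemSym_comm_T
    (R : Type) [CommRing R] (q : R) (hq : IsUnit q) (m r : ℕ) (hm : 0 < m)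
    (u : Fin m → R)
    (H : Type) [Ring H] [Algebra R H]
    (T L : ℕ → H)
    (hquad : ∀ i, 1 ≤ i → i ≤ r - 1 → (T i + 1) * (T i - algebraMap R H q) = 0)
    (hbraid : ∀ i, 1 ≤ i → i + 1 ≤ r - 1 → T i * T (i + 1) * T i = T (i + 1) * T i * T (i + 1))
    (hTT : ∀ i j, 1 ≤ i → j ≤ r - 1 → i + 1 < j → T i * T j = T j * T i)
    (hLL : ∀ i j, 1 ≤ i → i ≤ r → 1 ≤ j → j ≤ r → L i * L j = L j * L i)
    (hcyclo : (List.ofFn (fun k : Fin m => L 1 - algebraMap R H (u k))).prod = 0)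
    (hTLT : ∀ i, 1 ≤ i → i ≤ r - 1 → T i * L i * T i = algebraMap R H q * L (i + 1))
    (hLT : ∀ i j, 1 ≤ i → i ≤ r - 1 → 1 ≤ j → j ≤ r → j ≠ i → j ≠ i + 1 →
      L j * T i = T i * L j) :
    ∀ i j, 1 ≤ i → i ≤ r - 1 → 1 ≤ j → j ≤ r →
      T i * akElemSym L r j = akElemSym L r j * T i := by
  intro i j hi hir hj hjr
  have hi1r : i + 1 ≤ r := by omega
  set Q : H := algebraMap R H q with hQdef
  have hQu : IsUnit Q := hq.map (algebraMap R H)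
  have hQc : ∀ x : H, Q * x = x * Q := fun x => Algebra.commutes q x
  -- quadratic relation
  have hT2 : T i * T i = T i * Q - T i + Q := by
    have h0 := hquad i hi hir
    have h1 : T i * T i - T i * Q + T i - Q = 0 := by rw [← h0]; noncomm_ring
    have h2 : T i * T i - (T i * Q - T i + Q) = 0 := by rw [← h1]; abel
    exact sub_eq_zero.mp h2
  have hTLTi := hTLT i hi hir
  -- eq1 : T L_{i+1} = Q L_{i+1} - L_{i+1} + L_i T
  have eq1 : T i * L (i + 1) = Q * L (i + 1) - L (i + 1) + L i * T i := by
    have lhs : T i * T i * (L i * T i) = Q * (T i * L (i + 1)) := by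
      calc T i * T i * (L i * T i) = T i * (T i * L i * T i) := by noncomm_ring
        _ = T i * (Q * L (i + 1)) := by rw [hTLTi]
        _ = Q * (T i * L (i + 1)) := by rw [← mul_assoc, ← hQc, mul_assoc]
    have rhs : T i * T i * (L i * T i)
        = Q * (Q * L (i + 1) - L (i + 1) + L i * T i) := by
      calc T i * T i * (L i * T i) = (T i * Q - T i + Q) * (L i * T i) := by rw [hT2]
        _ = T i * (Q * (L i * T i)) - T i * (L i * T i) + Q * (L i * T i) := by
            noncomm_ring
        _ = T i * ((L i * T i) * Q) - T i * (L i * T i) + (L i * T i) * Q := by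
            rw [hQc (L i * T i)]
        _ = (T i * L i * T i) * Q - T i * L i * T i + (L i * T i) * Q := by
            noncomm_ring
        _ = (Q * L (i + 1)) * Q - Q * L (i + 1) + (L i * T i) * Q := by rw [hTLTi]
        _ = Q * (Q * L (i + 1) - L (i + 1) + L i * T i) := by
            rw [show (Q * L (i + 1)) * Q = Q * (Q * L (i + 1)) from by
                  rw [mul_assoc, ← hQc],
                show (L i * T i) * Q = Q * (L i * T i) from (hQc _).symm]
            noncomm_ring
    exact hQu.mul_left_cancel (lhs.symm.trans rhs)
  -- eq2 : T L_i = L_{i+1} T - Q L_{i+1} + L_{i+1}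
  have eq2 : T i * L i = L (i + 1) * T i - Q * L (i + 1) + L (i + 1) := by
    have lhs : T i * L i * (T i * T i) = Q * (L (i + 1) * T i) := by
      calc T i * L i * (T i * T i) = (T i * L i * T i) * T i := by noncomm_ring
        _ = (Q * L (i + 1)) * T i := by rw [hTLTi]
        _ = Q * (L (i + 1) * T i) := by rw [mul_assoc]
    have rhs : T i * L i * (T i * T i)
        = Q * (Q * L (i + 1) - L (i + 1) + T i * L i) := by
      calc T i * L i * (T i * T i) = T i * L i * (T i * Q - T i + Q) := by rw [hT2]
        _ = (T i * L i * T i) * Q - T i * L i * T i + (T i * L i) * Q := by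
            noncomm_ring
        _ = (Q * L (i + 1)) * Q - Q * L (i + 1) + (T i * L i) * Q := by rw [hTLTi]
        _ = Q * (Q * L (i + 1) - L (i + 1) + T i * L i) := by
            rw [show (Q * L (i + 1)) * Q = Q * (Q * L (i + 1)) from by
                  rw [mul_assoc, ← hQc],
                show (T i * L i) * Q = Q * (T i * L i) from (hQc _).symm]
            noncomm_ring
    have e := hQu.mul_left_cancel (lhs.symm.trans rhs)
    rw [e]; abel
  -- commuting with the sum and product of L_i and L_{i+1}
  have hLLi : L i * L (i + 1) = L (i + 1) * L i :=
    hLL i (i+1) hi (by omega) (by omega) hi1r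
  have hsum : Commute (T i) (L i + L (i + 1)) := by
    rw [commute_iff_eq, mul_add, eq1, eq2, add_mul]; abel
  have hprod : Commute (T i) (L i * L (i + 1)) := by
    rw [commute_iff_eq]
    calc T i * (L i * L (i + 1)) = (T i * L i) * L (i + 1) := by rw [mul_assoc]
      _ = (L (i + 1) * T i - Q * L (i + 1) + L (i + 1)) * L (i + 1) := by rw [eq2]
      _ = L (i + 1) * (T i * L (i + 1)) - Q * (L (i + 1) * L (i + 1))
            + L (i + 1) * L (i + 1) := by noncomm_ring
      _ = L (i + 1) * (Q * L (i + 1) - L (i + 1) + L i * T i)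
            - Q * (L (i + 1) * L (i + 1)) + L (i + 1) * L (i + 1) := by rw [eq1]
      _ = L (i + 1) * (Q * L (i + 1)) - Q * (L (i + 1) * L (i + 1))
            + L (i + 1) * (L i * T i) := by noncomm_ring
      _ = L (i + 1) * L i * T i := by
          rw [show L (i + 1) * (Q * L (i + 1)) = Q * (L (i + 1) * L (i + 1)) from by
            rw [← mul_assoc, ← hQc, mul_assoc]]
          noncomm_ring
      _ = (L i * L (i + 1)) * T i := by rw [hLLi]
  -- T i commutes with all L k for admissible k ∉ {i, i+1}
  have hTLk : ∀ k, 1 ≤ k → k ≤ r → k ≠ i → k ≠ i + 1 → Commute (T i) (L k) :=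
    fun k h1 h2 h3 h4 => (hLT i k hi hir h1 h2 h3 h4).symm
  -- destructure i = i' + 1
  obtain ⟨i', rfl⟩ : ∃ i', i = i' + 1 := ⟨i - 1, by omega⟩
  -- commutation with elementary symmetric polynomials in L_1,...,L_{i'}
  have Ecomm : ∀ k, Commute (T (i' + 1)) (akElemSym L i' k) := fun k => by
    refine commute_akElemSym L (T (i' + 1)) i' k fun a ha => ?_
    simp only [Finset.mem_Icc] at ha
    exact hTLk a ha.1 (by omega) (by omega) (by omega)
  -- base case: commutation with akElemSym L (i+1) k for every k
  have base : ∀ k, Commute (T (i' + 1)) (akElemSym L (i' + 1 + 1) k) := by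
    intro k
    have hk3 : k = 0 ∨ k = 1 ∨ ∃ k', k = k' + 2 := by
      rcases k with _ | k
      · exact Or.inl rfl
      · rcases k with _ | k'
        · exact Or.inr (Or.inl rfl)
        · exact Or.inr (Or.inr ⟨k', rfl⟩)
    rcases hk3 with rfl | rfl | ⟨k', rfl⟩
    · rw [akElemSym_zero]; exact Commute.one_right _
    · have e1 := akElemSym_succ L (i' + 1) 0
      have e2 := akElemSym_succ L i' 0
      norm_num at e1 e2
      rw [e1, e2, akElemSym_zero, akElemSym_zero, one_mul, one_mul, add_assoc]
      exact (Ecomm 1).add_right hsum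
    · have e1 := akElemSym_succ L (i' + 1) (k' + 1)
      have e2 := akElemSym_succ L i' (k' + 1)
      have e3 := akElemSym_succ L i' k'
      have hre : k' + 1 + 1 = k' + 2 := rfl
      rw [hre] at e1 e2
      rw [e1, e2, e3]
      have expand :
          akElemSym L i' (k' + 2) + akElemSym L i' (k' + 1) * L (i' + 1)
            + (akElemSym L i' (k' + 1) + akElemSym L i' k' * L (i' + 1)) * L (i' + 1 + 1)
          = akElemSym L i' (k' + 2)
            + akElemSym L i' (k' + 1) * (L (i' + 1) + L (i' + 1 + 1))
            + akElemSym L i' k' * (L (i' + 1) * L (i' + 1 + 1)) := by noncomm_ring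
      rw [expand]
      exact ((Ecomm (k' + 2)).add_right ((Ecomm (k' + 1)).mul_right hsum)).add_right
        ((Ecomm k').mul_right hprod)
  -- induction going up from i+1 to r
  have main : ∀ d, ∀ jj, i' + 1 + 1 + d ≤ r →
      Commute (T (i' + 1)) (akElemSym L (i' + 1 + 1 + d) jj) := by
    intro d
    induction d with
    | zero => intro jj _; exact base jj
    | succ d ih =>
        intro jj hle
        have hstep : i' + 1 + 1 + (d + 1) = (i' + 1 + 1 + d) + 1 := rfl
        rw [hstep]
        have hjj : jj = 0 ∨ ∃ jj', jj = jj' + 1 := by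
          rcases jj with _ | jj'
          · exact Or.inl rfl
          · exact Or.inr ⟨jj', rfl⟩
        rcases hjj with rfl | ⟨jj', rfl⟩
        · rw [akElemSym_zero]; exact Commute.one_right _
        · rw [akElemSym_succ]
          refine (ih (jj' + 1) (by omega)).add_right ((ih jj' (by omega)).mul_right ?_)
          exact hTLk (i' + 1 + 1 + d + 1) (by omega) (by omega) (by omega) (by omega)
  have comm := main (r - (i' + 1 + 1)) j (by omega)
  rw [show i' + 1 + 1 + (r - (i' + 1 + 1)) = r from by omega] at comm
  exact comm
end

section
/- Suppose z = Σ_{b ∈ (ℤ/m)^r} c_b x_{(r)} L^b lies in x_{(r)}H_u(r) ∩ H_u(r)x_{(r)}, where x_{(r)} = Σ_{w ∈ S_r} T_w. Then the coefficients are symmetric: c_b = c_{b·w} for all b ∈ (ℤ/m)^r and all w ∈ S_r, where b·w = (b_{w(1)},…,b_{w(r)}). -/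
/-- The monomial `L^b = L_1^{b_1} ⋯ L_r^{b_r}` with exponent vector `b ∈ {0,…,m−1}^r`. -/
def akLmonF {H : Type} [Ring H] (L : ℕ → H) {r m : ℕ} (b : Fin r → Fin m) : H :=
  (List.ofFn (fun j : Fin r => L ((j : ℕ) + 1) ^ ((b j : ℕ)))).prod

/-- Coxeter length (number of inversions) of a permutation of `{0,…,r−1}`. -/
def permLen {r : ℕ} (w : Equiv.Perm (Fin r)) : ℕ :=
  (Finset.univ.filter (fun p : Fin r × Fin r => p.1 < p.2 ∧ w p.2 < w p.1)).card

namespace AKaux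
open Finset


def invSet {r : ℕ} (w : Equiv.Perm (Fin r)) : Finset (Fin r × Fin r) :=
  Finset.univ.filter (fun p : Fin r × Fin r => p.1 < p.2 ∧ w p.2 < w p.1)

lemma permLen_eq {r : ℕ} (w : Equiv.Perm (Fin r)) : permLen w = (invSet w).card := rfl

lemma swap_lt_swap {r : ℕ} {a b x y : Fin r} (hab : (a:ℕ) + 1 = b)
    (hxy : x < y) (hne : ¬(x = a ∧ y = b)) :
    Equiv.swap a b x < Equiv.swap a b y := by
  have hvab : (a:ℕ) < b := by omega
  have hab' : a ≠ b := fun h => by rw [h] at hab; omega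
  rcases eq_or_ne x a with rfl | hxa
  · have hyb : y ≠ b := fun h => hne ⟨rfl, h⟩
    have hya : y ≠ x := (ne_of_gt hxy)
    rw [Equiv.swap_apply_left, Equiv.swap_apply_of_ne_of_ne hya hyb]
    have h1 : (x:ℕ) < y := hxy
    have h2 : (y:ℕ) ≠ b := Fin.val_ne_iff.2 hyb
    exact Fin.lt_def.2 (by omega)
  rcases eq_or_ne x b with rfl | hxb
  · have hya : y ≠ a := fun h => by
      have := hxy; rw [h] at this; exact absurd (Fin.lt_def.1 this) (by omega)
    have hyb : y ≠ x := (ne_of_gt hxy)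
    rw [Equiv.swap_apply_right, Equiv.swap_apply_of_ne_of_ne hya hyb]
    exact Fin.lt_def.2 (by have := Fin.lt_def.1 hxy; omega)
  rcases eq_or_ne y a with rfl | hya
  · rw [Equiv.swap_apply_left, Equiv.swap_apply_of_ne_of_ne hxa hxb]
    exact Fin.lt_def.2 (by have := Fin.lt_def.1 hxy; omega)
  rcases eq_or_ne y b with hyb' | hyb
  · rw [hyb', Equiv.swap_apply_right, Equiv.swap_apply_of_ne_of_ne hxa hxb]
    have h1 : (x:ℕ) < y := hxy
    have h2 : (x:ℕ) ≠ a := Fin.val_ne_iff.2 hxa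
    have h3 : (y:ℕ) = b := congrArg Fin.val hyb'
    exact Fin.lt_def.2 (by omega)
  · rw [Equiv.swap_apply_of_ne_of_ne hxa hxb, Equiv.swap_apply_of_ne_of_ne hya hyb]
    exact hxy

lemma invSet_erase_card {r : ℕ} {a b : Fin r} (hab : (a:ℕ)+1 = b) (w : Equiv.Perm (Fin r)) :
    ((invSet (w * Equiv.swap a b)).erase (a, b)).card = ((invSet w).erase (a, b)).card := by
  have hlt : a < b := Fin.lt_def.2 (by omega)
  have key : ∀ (v : Equiv.Perm (Fin r)) (p : Fin r × Fin r),
      p ∈ ((invSet (v * Equiv.swap a b)).erase (a, b)) →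
      (Equiv.swap a b p.1, Equiv.swap a b p.2) ∈ ((invSet v).erase (a, b)) := by
    rintro v ⟨p1, p2⟩ hp
    rw [Finset.mem_erase, invSet, Finset.mem_filter] at hp
    obtain ⟨hne, -, h12, hw⟩ := hp
    rw [Finset.mem_erase, invSet, Finset.mem_filter]
    refine ⟨?_, Finset.mem_univ _, ?_, ?_⟩
    · intro hcon
      have h1 : Equiv.swap a b p1 = a := congrArg Prod.fst hcon
      have h2 : Equiv.swap a b p2 = b := congrArg Prod.snd hcon
      have e1 : p1 = b := by
        have := congrArg (Equiv.swap a b) h1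
        rwa [Equiv.swap_apply_self, Equiv.swap_apply_left] at this
      have e2 : p2 = a := by
        have := congrArg (Equiv.swap a b) h2
        rwa [Equiv.swap_apply_self, Equiv.swap_apply_right] at this
      rw [e1, e2] at h12
      exact absurd hlt (not_lt.2 h12.le)
    · refine swap_lt_swap hab h12 ?_
      rintro ⟨h1, h2⟩
      exact hne (Prod.ext h1 h2)
    · simpa only [Equiv.Perm.mul_apply] using hw
  have key2 : ∀ p : Fin r × Fin r,
      p ∈ ((invSet w).erase (a, b)) →
      (Equiv.swap a b p.1, Equiv.swap a b p.2) ∈ ((invSet (w * Equiv.swap a b)).erase (a, b)) := by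
    intro p hp
    have : invSet w = invSet ((w * Equiv.swap a b) * Equiv.swap a b) := by
      rw [mul_assoc, Equiv.swap_mul_self, mul_one]
    rw [this] at hp
    exact key (w * Equiv.swap a b) p hp
  exact Finset.card_bij' (fun p _ => (Equiv.swap a b p.1, Equiv.swap a b p.2))
    (fun p _ => (Equiv.swap a b p.1, Equiv.swap a b p.2))
    (key w) key2
    (by rintro ⟨p1, p2⟩ hp
        simp only [Equiv.swap_apply_self])
    (by rintro ⟨p1, p2⟩ hp
        simp only [Equiv.swap_apply_self])

lemma mem_invSet_pair {r : ℕ} {a b : Fin r} (hab : (a:ℕ)+1 = b) (w : Equiv.Perm (Fin r)) :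
    ((a, b) ∈ invSet w) ↔ w b < w a := by
  rw [invSet, Finset.mem_filter]
  constructor
  · rintro ⟨-, -, h⟩; exact h
  · intro h
    refine ⟨Finset.mem_univ _, ?_, h⟩
    show a < b
    exact Fin.lt_def.2 (by omega)

lemma permLen_mul_swap_of_lt {r : ℕ} {a b : Fin r} (hab : (a:ℕ)+1 = b)
    {w : Equiv.Perm (Fin r)} (h : w a < w b) :
    permLen (w * Equiv.swap a b) = permLen w + 1 := by
  have hmem : (a, b) ∈ invSet (w * Equiv.swap a b) := by
    rw [mem_invSet_pair hab]
    simpa only [Equiv.Perm.mul_apply, Equiv.swap_apply_left, Equiv.swap_apply_right] using h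
  have hnot : (a, b) ∉ invSet w := by
    rw [mem_invSet_pair hab]; exact not_lt.2 h.le
  rw [permLen_eq, permLen_eq, ← Finset.card_erase_add_one hmem,
    invSet_erase_card hab, Finset.erase_eq_of_notMem hnot]

lemma permLen_mul_swap_of_gt {r : ℕ} {a b : Fin r} (hab : (a:ℕ)+1 = b)
    {w : Equiv.Perm (Fin r)} (h : w b < w a) :
    permLen w = permLen (w * Equiv.swap a b) + 1 := by
  have hmem : (a, b) ∈ invSet w := (mem_invSet_pair hab w).2 h
  have hnot : (a, b) ∉ invSet (w * Equiv.swap a b) := by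
    rw [mem_invSet_pair hab]
    simp only [Equiv.Perm.mul_apply, Equiv.swap_apply_left, Equiv.swap_apply_right]
    exact not_lt.2 h.le
  rw [permLen_eq, permLen_eq, ← Finset.card_erase_add_one hmem,
    ← invSet_erase_card hab, Finset.erase_eq_of_notMem hnot]

lemma permLen_one {r : ℕ} : permLen (1 : Equiv.Perm (Fin r)) = 0 := by
  rw [permLen]
  convert Finset.card_empty
  rw [Finset.filter_eq_empty_iff]
  rintro ⟨p1, p2⟩ -
  simp only [Equiv.Perm.one_apply]
  rintro ⟨h1, h2⟩
  exact absurd h2 (not_lt.2 h1.le)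

lemma permLen_swap {r : ℕ} {a b : Fin r} (hab : (a:ℕ)+1 = b) :
    permLen (Equiv.swap a b) = 1 := by
  have h : (1 : Equiv.Perm (Fin r)) a < (1 : Equiv.Perm (Fin r)) b := by
    simp only [Equiv.Perm.one_apply]; exact Fin.lt_def.2 (by omega)
  have := permLen_mul_swap_of_lt hab h
  rwa [one_mul, permLen_one, zero_add] at this




section RingLemmas
variable {H : Type} [Ring H] {t x y qb : H}

lemma central_sub_one (hc : ∀ h : H, qb * h = h * qb) : ∀ h : H, (qb - 1) * h = h * (qb - 1) := by
  intro h; rw [sub_mul, mul_sub, hc, one_mul, mul_one]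

lemma ht2_of_quad (hc : ∀ h : H, qb * h = h * qb) (hquad : (t + 1) * (t - qb) = 0) :
    t * t = (qb - 1) * t + qb := by
  have e' : t * t - (t * qb - t + qb) = (t + 1) * (t - qb) := by noncomm_ring
  have e : t * t = t * qb - t + qb := sub_eq_zero.mp (by rw [e', hquad])
  rw [e, ← hc t]; noncomm_ring

lemma lyt_lemma (hc : ∀ h : H, qb * h = h * qb) (hu : IsUnit qb)
    (htxt : t * x * t = qb * y) (ht2 : t * t = (qb - 1) * t + qb) :
    y * t = t * x + (qb - 1) * y := by
  have ca := central_sub_one hc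
  apply hu.mul_left_cancel
  calc qb * (y * t) = (qb * y) * t := by rw [mul_assoc]
    _ = (t * x * t) * t := by rw [htxt]
    _ = (t * x) * (t * t) := by rw [mul_assoc (t * x)]
    _ = (t * x) * ((qb - 1) * t + qb) := by rw [ht2]
    _ = (t * x) * ((qb - 1) * t) + (t * x) * qb := by rw [mul_add]
    _ = ((t * x) * (qb - 1)) * t + qb * (t * x) := by rw [← mul_assoc, hc]
    _ = ((qb - 1) * (t * x)) * t + qb * (t * x) := by rw [ca]
    _ = (qb - 1) * (t * x * t) + qb * (t * x) := by rw [mul_assoc]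
    _ = (qb - 1) * (qb * y) + qb * (t * x) := by rw [htxt]
    _ = qb * ((qb - 1) * y) + qb * (t * x) := by
        rw [← mul_assoc, ca qb, mul_assoc]
    _ = qb * (t * x + (qb - 1) * y) := by rw [← mul_add, add_comm]

lemma lty_lemma (hc : ∀ h : H, qb * h = h * qb) (hu : IsUnit qb)
    (htxt : t * x * t = qb * y) (ht2 : t * t = (qb - 1) * t + qb) :
    t * y = x * t + (qb - 1) * y := by
  have ca := central_sub_one hc
  apply hu.mul_left_cancel
  calc qb * (t * y) = t * (qb * y) := by rw [← mul_assoc, hc t, mul_assoc]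
    _ = t * (t * x * t) := by rw [htxt]
    _ = (t * t) * (x * t) := by noncomm_ring
    _ = ((qb - 1) * t + qb) * (x * t) := by rw [ht2]
    _ = (qb - 1) * (t * (x * t)) + qb * (x * t) := by rw [add_mul, mul_assoc]
    _ = (qb - 1) * (t * x * t) + qb * (x * t) := by rw [mul_assoc]
    _ = (qb - 1) * (qb * y) + qb * (x * t) := by rw [htxt]
    _ = qb * ((qb - 1) * y) + qb * (x * t) := by rw [← mul_assoc, ca qb, mul_assoc]
    _ = qb * (x * t + (qb - 1) * y) := by rw [← mul_add, add_comm]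

lemma lxyt_lemma (hc : ∀ h : H, qb * h = h * qb) (hxy : x * y = y * x)
    (lyt : y * t = t * x + (qb - 1) * y) (lty : t * y = x * t + (qb - 1) * y) :
    (x * y) * t = t * (x * y) := by
  have ca := central_sub_one hc
  calc (x * y) * t = x * (y * t) := by rw [mul_assoc]
    _ = x * (t * x) + x * ((qb - 1) * y) := by rw [lyt, mul_add]
    _ = (x * t) * x + (qb - 1) * (x * y) := by
        rw [← mul_assoc x (qb - 1) y, ← ca x]; noncomm_ring
    _ = (t * y - (qb - 1) * y) * x + (qb - 1) * (x * y) := by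
        rw [eq_sub_of_add_eq lty.symm]
    _ = t * (y * x) - (qb - 1) * (y * x) + (qb - 1) * (x * y) := by
        rw [sub_mul, mul_assoc, mul_assoc]
    _ = t * (x * y) := by rw [← hxy]; noncomm_ring

lemma l5_lemma (hc : ∀ h : H, qb * h = h * qb) (hxy : x * y = y * x)
    (lxt : x * t = t * y - (qb - 1) * y) :
    ∀ n : ℕ, x ^ n * t = t * y ^ n - (qb - 1) * ∑ k ∈ range n, x ^ k * y ^ (n - k) := by
  have ca := central_sub_one hc
  intro n
  induction n with
  | zero => simp
  | succ n ih =>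
    calc x ^ (n + 1) * t = x ^ n * (x * t) := by rw [pow_succ, mul_assoc]
      _ = x ^ n * (t * y) - x ^ n * ((qb - 1) * y) := by rw [lxt, mul_sub]
      _ = (x ^ n * t) * y - (qb - 1) * (x ^ n * y) := by
          rw [← mul_assoc (x ^ n) (qb - 1) y, ← ca (x ^ n)]; noncomm_ring
      _ = (t * y ^ n - (qb - 1) * ∑ k ∈ range n, x ^ k * y ^ (n - k)) * y
            - (qb - 1) * (x ^ n * y) := by rw [ih]
      _ = t * y ^ (n + 1) - (qb - 1) *
            ((∑ k ∈ range n, x ^ k * y ^ (n - k)) * y + x ^ n * y) := by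
          rw [sub_mul, mul_assoc, ← pow_succ, mul_assoc]; noncomm_ring
      _ = t * y ^ (n + 1) - (qb - 1) * ∑ k ∈ range (n + 1), x ^ k * y ^ (n + 1 - k) := by
          have hsum : ∑ k ∈ range n, x ^ k * y ^ (n - k) * y
              = ∑ k ∈ range n, x ^ k * y ^ (n + 1 - k) := by
            apply Finset.sum_congr rfl
            intro k hk
            rw [Finset.mem_range] at hk
            rw [mul_assoc, ← pow_succ]
            have hnk : n - k + 1 = n + 1 - k := by omega
            rw [hnk]
          rw [Finset.sum_mul, hsum, Finset.sum_range_succ, Nat.add_sub_cancel_left, pow_one]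

lemma l6_lemma (hc : ∀ h : H, qb * h = h * qb) (hxy : x * y = y * x)
    (lyt : y * t = t * x + (qb - 1) * y) :
    ∀ n : ℕ, y ^ n * t = t * x ^ n + (qb - 1) * ∑ k ∈ range n, x ^ k * y ^ (n - k) := by
  have ca := central_sub_one hc
  have cxy : Commute x y := hxy
  intro n
  induction n with
  | zero => simp
  | succ n ih =>
    calc y ^ (n + 1) * t = y ^ n * (y * t) := by rw [pow_succ, mul_assoc]
      _ = y ^ n * (t * x) + y ^ n * ((qb - 1) * y) := by rw [lyt, mul_add]
      _ = (y ^ n * t) * x + (qb - 1) * y ^ (n + 1) := by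
          rw [← mul_assoc (y ^ n) (qb - 1) y, ← ca (y ^ n), mul_assoc (qb - 1) (y ^ n) y,
            ← pow_succ]; noncomm_ring
      _ = (t * x ^ n + (qb - 1) * ∑ k ∈ range n, x ^ k * y ^ (n - k)) * x
            + (qb - 1) * y ^ (n + 1) := by rw [ih]
      _ = t * x ^ (n + 1) + (qb - 1) *
            ((∑ k ∈ range n, x ^ k * y ^ (n - k)) * x + y ^ (n + 1)) := by
          rw [add_mul, mul_assoc, ← pow_succ, mul_assoc]; noncomm_ring
      _ = t * x ^ (n + 1) + (qb - 1) * ∑ k ∈ range (n + 1), x ^ k * y ^ (n + 1 - k) := by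
          have hsum : ∑ k ∈ range (n + 1), x ^ k * y ^ (n + 1 - k)
              = (∑ k ∈ range n, x ^ k * y ^ (n - k)) * x + y ^ (n + 1) := by
            rw [Finset.sum_range_succ' (fun k => x ^ k * y ^ (n + 1 - k)) n, Finset.sum_mul]
            congr 1
            · apply Finset.sum_congr rfl
              intro k hk
              rw [Finset.mem_range] at hk
              rw [mul_assoc, ((cxy.symm).pow_left (n - k)).eq, ← mul_assoc, ← pow_succ]
              have hnk : n + 1 - (k + 1) = n - k := by omega
              rw [hnk]
            · rw [pow_zero, one_mul, Nat.sub_zero]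
          rw [hsum]

lemma l7_lemma (hc : ∀ h : H, qb * h = h * qb) (hxy : x * y = y * x)
    (lxt : x * t = t * y - (qb - 1) * y)
    (lyt : y * t = t * x + (qb - 1) * y)
    (lxyt : (x * y) * t = t * (x * y)) :
    ∀ a b : ℕ, (x ^ a * y ^ b) * t = t * (x ^ b * y ^ a) + (qb - 1) *
      ((∑ k ∈ Ico a b, x ^ k * y ^ (a + b - k)) - (∑ k ∈ Ico b a, x ^ k * y ^ (a + b - k))) := by
  have ca := central_sub_one hc
  have cxy : Commute x y := hxy
  have cxyt : Commute (x * y) t := lxyt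
  intro a b
  rcases le_total a b with hab | hab
  · -- a ≤ b : use l6 with n = b - a
    have key := l6_lemma hc hxy lyt (b - a)
    have e1 : x ^ a * y ^ b = (x * y) ^ a * y ^ (b - a) := by
      rw [cxy.mul_pow, mul_assoc, ← pow_add]
      congr 2
      omega
    have e2 : (x * y) ^ a * (x ^ (b - a)) = x ^ b * y ^ a := by
      rw [cxy.mul_pow, mul_assoc, (cxy.symm.pow_pow a (b - a)).eq, ← mul_assoc, ← pow_add]
      congr 2
      omega
    have hico : Ico b a = ∅ := Ico_eq_empty (by omega)
    have hterm : ∀ k, k < b - a → (x * y) ^ a * (x ^ k * y ^ (b - a - k))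
        = x ^ (a + k) * y ^ (a + b - (a + k)) := by
      intro k hk
      rw [cxy.mul_pow, (cxy.symm.pow_pow a k).mul_mul_mul_comm (x ^ a) (y ^ (b - a - k)),
        ← pow_add, ← pow_add]
      have h2 : a + (b - a - k) = a + b - (a + k) := by omega
      rw [h2]
    rw [e1, mul_assoc, key, mul_add, ← mul_assoc, (cxyt.pow_left a).eq, mul_assoc, e2,
      hico, Finset.sum_empty, sub_zero]
    congr 1
    rw [← mul_assoc, ← ca ((x*y)^a), mul_assoc, Finset.mul_sum,
      Finset.sum_Ico_eq_sum_range]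
    congr 1
    apply Finset.sum_congr rfl
    intro k hk
    rw [Finset.mem_range] at hk
    exact hterm k hk
  · -- b ≤ a : use l5 with n = a - b
    have key := l5_lemma hc hxy lxt (a - b)
    have e1 : x ^ a * y ^ b = (x * y) ^ b * x ^ (a - b) := by
      rw [cxy.mul_pow, mul_assoc, (cxy.symm.pow_pow b (a - b)).eq, ← mul_assoc, ← pow_add]
      congr 2
      omega
    have e2 : (x * y) ^ b * (y ^ (a - b)) = x ^ b * y ^ a := by
      rw [cxy.mul_pow, mul_assoc, ← pow_add]
      congr 2
      omega
    have hico : Ico a b = ∅ := Ico_eq_empty (by omega)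
    have hterm : ∀ k, k < a - b → (x * y) ^ b * (x ^ k * y ^ (a - b - k))
        = x ^ (b + k) * y ^ (a + b - (b + k)) := by
      intro k hk
      rw [cxy.mul_pow, (cxy.symm.pow_pow b k).mul_mul_mul_comm (x ^ b) (y ^ (a - b - k)),
        ← pow_add, ← pow_add]
      have h2 : b + (a - b - k) = a + b - (b + k) := by omega
      rw [h2]
    rw [e1, mul_assoc, key, mul_sub, ← mul_assoc, (cxyt.pow_left b).eq, mul_assoc, e2,
      hico, Finset.sum_empty, zero_sub, mul_neg, ← sub_eq_add_neg]
    congr 1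
    rw [← mul_assoc, ← ca ((x*y)^b), mul_assoc, Finset.mul_sum,
      Finset.sum_Ico_eq_sum_range]
    congr 1
    apply Finset.sum_congr rfl
    intro k hk
    rw [Finset.mem_range] at hk
    exact hterm k hk

end RingLemmas

lemma x_mul_T
    {R : Type} [CommRing R] {q : R} {r : ℕ} {H : Type} [Ring H] [Algebra R H]
    (T : ℕ → H)
    (hquad : ∀ i, 1 ≤ i → i ≤ r - 1 → (T i + 1) * (T i - algebraMap R H q) = 0)
    (Tw : Equiv.Perm (Fin r) → H)
    (hTwmul : ∀ w w' : Equiv.Perm (Fin r), permLen (w * w') = permLen w + permLen w' →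
      Tw (w * w') = Tw w * Tw w')
    (hTwgen : ∀ (i : ℕ) (h1 : 1 ≤ i) (h2 : i < r),
      Tw (Equiv.swap ⟨i - 1, Nat.lt_of_le_of_lt (Nat.sub_le i 1) h2⟩ ⟨i, h2⟩) = T i)
    (i : ℕ) (h1 : 1 ≤ i) (h2 : i < r) :
    (∑ w : Equiv.Perm (Fin r), Tw w) * T i
      = algebraMap R H q * ∑ w : Equiv.Perm (Fin r), Tw w := by
  classical
  set qb : H := algebraMap R H q with hqb
  have hc : ∀ h : H, qb * h = h * qb := fun h => Algebra.commutes q h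
  set A : Fin r := ⟨i - 1, by omega⟩ with hA
  set B : Fin r := ⟨i, h2⟩ with hB
  have hab : (A:ℕ) + 1 = B := by simp [hA, hB]; omega
  set s : Equiv.Perm (Fin r) := Equiv.swap A B with hs
  have hts : Tw s = T i := hTwgen i h1 h2
  have ht2 : T i * T i = (qb - 1) * T i + qb :=
    ht2_of_quad hc (hquad i h1 (by omega))
  have hABne : ∀ w : Equiv.Perm (Fin r), w A ≠ w B := by
    intro w hcon
    have : A = B := w.injective hcon
    have := congrArg Fin.val this
    simp [hA, hB] at this
    omega
  have hPmul : ∀ w : Equiv.Perm (Fin r), w A < w B → Tw (w * s) = Tw w * T i := by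
    intro w hw
    rw [← hts]
    exact hTwmul w s (by rw [permLen_mul_swap_of_lt hab hw, permLen_swap hab])
  have hinv : ∀ w : Equiv.Perm (Fin r), (w * s) * s = w := by
    intro w
    rw [mul_assoc, hs, Equiv.swap_mul_self, mul_one]
  have hsA : ∀ w : Equiv.Perm (Fin r), (w * s) A = w B := by
    intro w; rw [Equiv.Perm.mul_apply, hs, Equiv.swap_apply_left]
  have hsB : ∀ w : Equiv.Perm (Fin r), (w * s) B = w A := by
    intro w; rw [Equiv.Perm.mul_apply, hs, Equiv.swap_apply_right]
  set P : Equiv.Perm (Fin r) → Prop := fun w => w A < w B with hP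
  have hflip1 : ∀ w : Equiv.Perm (Fin r), P w → ¬ P (w * s) := by
    intro w hw hcon
    have hcon' : (w * s) A < (w * s) B := hcon
    rw [hsA, hsB] at hcon'
    exact absurd (hw : w A < w B) (not_lt.2 hcon'.le)
  have hflip2 : ∀ w : Equiv.Perm (Fin r), ¬ P w → P (w * s) := by
    intro w hw
    rcases lt_or_gt_of_ne (hABne w) with h | h
    · exact absurd (h : P w) hw
    · show (w * s) A < (w * s) B
      rw [hsA, hsB]
      exact h
  have hre : ∀ f : Equiv.Perm (Fin r) → H,
      ∑ w ∈ Finset.univ.filter P, f (w * s)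
        = ∑ w ∈ Finset.univ.filter (fun w => ¬ P w), f w := by
    intro f
    apply Finset.sum_nbij' (fun w => w * s) (fun w => w * s)
    · intro w hw
      rw [Finset.mem_filter] at hw ⊢
      exact ⟨Finset.mem_univ _, hflip1 w hw.2⟩
    · intro w hw
      rw [Finset.mem_filter] at hw ⊢
      refine ⟨Finset.mem_univ _, ?_⟩
      exact hflip2 w hw.2
    · intro w _; exact hinv w
    · intro w _; exact hinv w
    · intro w _; rfl
  have hre2 : ∀ f : Equiv.Perm (Fin r) → H,
      ∑ w ∈ Finset.univ.filter (fun w => ¬ P w), f (w * s)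
        = ∑ w ∈ Finset.univ.filter P, f w := by
    intro f
    apply Finset.sum_nbij' (fun w => w * s) (fun w => w * s)
    · intro w hw
      rw [Finset.mem_filter] at hw ⊢
      exact ⟨Finset.mem_univ _, hflip2 w hw.2⟩
    · intro w hw
      rw [Finset.mem_filter] at hw ⊢
      refine ⟨Finset.mem_univ _, ?_⟩
      exact hflip1 w hw.2
    · intro w _; exact hinv w
    · intro w _; exact hinv w
    · intro w _; rfl
  rw [← Finset.sum_filter_add_sum_filter_not Finset.univ P (fun w => Tw w)]
  rw [add_mul, Finset.sum_mul, Finset.sum_mul]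
  have e1 : ∑ w ∈ Finset.univ.filter P, Tw w * T i
      = ∑ w ∈ Finset.univ.filter (fun w => ¬ P w), Tw w := by
    rw [← hre (fun w => Tw w)]
    apply Finset.sum_congr rfl
    intro w hw
    rw [Finset.mem_filter] at hw
    exact (hPmul w hw.2).symm
  have e2 : ∑ w ∈ Finset.univ.filter (fun w => ¬ P w), Tw w * T i
      = (qb - 1) * ∑ w ∈ Finset.univ.filter (fun w => ¬ P w), Tw w
        + qb * ∑ w ∈ Finset.univ.filter P, Tw w := by
    rw [Finset.mul_sum, Finset.mul_sum, ← hre2 (fun w => qb * Tw w), ← Finset.sum_add_distrib]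
    apply Finset.sum_congr rfl
    intro w hw
    rw [Finset.mem_filter] at hw
    have hwP : P (w * s) := hflip2 w hw.2
    have hTww : Tw w = Tw (w * s) * T i := by
      have := hPmul (w * s) hwP
      rw [hinv w] at this
      exact this
    calc Tw w * T i = Tw (w * s) * (T i * T i) := by rw [hTww, mul_assoc]
      _ = Tw (w * s) * ((qb - 1) * T i) + Tw (w * s) * qb := by rw [ht2, mul_add]
      _ = (qb - 1) * (Tw (w * s) * T i) + qb * Tw (w * s) := by
          rw [← mul_assoc, ← central_sub_one hc (Tw (w * s)), mul_assoc, ← hc (Tw (w * s))]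
      _ = (qb - 1) * Tw w + qb * Tw (w * s) := by rw [← hTww]
  rw [e1, e2, mul_add]
  noncomm_ring



def gLf {H : Type} [Ring H] (L : ℕ → H) {r m : ℕ} (b : Fin r → Fin m) (j : ℕ) : H :=
  if h : j < r then L (j + 1) ^ ((b ⟨j, h⟩ : ℕ)) else 1

lemma akLmonF_eq {H : Type} [Ring H] (L : ℕ → H) {r m : ℕ} (b : Fin r → Fin m) :
    akLmonF L b = ((List.range r).map (gLf L b)).prod := by
  rw [akLmonF]
  congr 1
  apply List.ext_getElem
  · simp
  · intro n h1 h2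
    simp only [List.getElem_ofFn, List.getElem_map, List.getElem_range]
    rw [List.length_ofFn] at h1
    rw [gLf, dif_pos h1]

lemma prod_map_range_split {H : Type} [Ring H] (g : ℕ → H) {r i : ℕ} (h1 : 1 ≤ i) (h2 : i < r) :
    ((List.range r).map g).prod =
      ((List.range (i - 1)).map g).prod * (g (i - 1) * g i) *
        ((List.range (r - i - 1)).map (fun j => g (i + 1 + j))).prod := by
  have e : r = (i + 1) + (r - i - 1) := by omega
  conv_lhs => rw [e]
  rw [List.range_add, List.map_append, List.prod_append]
  congr 1
  · have e2 : i + 1 = (i - 1) + 2 := by omega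
    rw [e2, List.range_add]
    have : List.range 2 = [0, 1] := by decide
    rw [this]
    simp only [List.map_append, List.prod_append, List.map_cons, List.map_nil,
      List.prod_cons, List.prod_nil]
    rw [Nat.add_zero, show i - 1 + 1 = i by omega, mul_one]
  · rw [List.map_map]
    congr 1


lemma key_adjacent
    (R : Type) [CommRing R] (q : R) (hq : IsUnit q) (m r : ℕ) (hm : 0 < m)
    (H : Type) [Ring H] [Algebra R H]
    (T L : ℕ → H)
    (hquad : ∀ i, 1 ≤ i → i ≤ r - 1 → (T i + 1) * (T i - algebraMap R H q) = 0)
    (hLL : ∀ i j, 1 ≤ i → i ≤ r → 1 ≤ j → j ≤ r → L i * L j = L j * L i)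
    (hTLT : ∀ i, 1 ≤ i → i ≤ r - 1 → T i * L i * T i = algebraMap R H q * L (i + 1))
    (hLT : ∀ i j, 1 ≤ i → i ≤ r - 1 → 1 ≤ j → j ≤ r → j ≠ i → j ≠ i + 1 →
      L j * T i = T i * L j)
    (Tw : Equiv.Perm (Fin r) → H)
    (hTwmul : ∀ w w' : Equiv.Perm (Fin r), permLen (w * w') = permLen w + permLen w' →
      Tw (w * w') = Tw w * Tw w')
    (hTwgen : ∀ (i : ℕ) (h1 : 1 ≤ i) (h2 : i < r),
      Tw (Equiv.swap ⟨i - 1, Nat.lt_of_le_of_lt (Nat.sub_le i 1) h2⟩ ⟨i, h2⟩) = T i)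
    (x : H) (hx : x = ∑ w : Equiv.Perm (Fin r), Tw w)
    (hxLI : LinearIndependent R (fun b : Fin r → Fin m => x * akLmonF L b))
    (c : (Fin r → Fin m) → R)
    (z : H) (hz : z = ∑ b : Fin r → Fin m, c b • (x * akLmonF L b))
    (hzright : ∃ h : H, z = h * x)
    (i : ℕ) (h1 : 1 ≤ i) (h2 : i < r) :
    ∀ b : Fin r → Fin m, c (b ∘ (Equiv.swap (⟨i - 1, Nat.lt_of_le_of_lt (Nat.sub_le i 1) h2⟩ : Fin r) ⟨i, h2⟩)) = c b := by
  classical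
  set qb : H := algebraMap R H q with hqb
  have hc : ∀ h : H, qb * h = h * qb := fun h => Algebra.commutes q h
  have ca := central_sub_one hc
  have hu' : IsUnit qb := hq.map (algebraMap R H)
  set pa : Fin r := ⟨i - 1, by omega⟩ with hpa
  set pb : Fin r := ⟨i, h2⟩ with hpb
  have hpane : pa ≠ pb := by
    intro h
    have := congrArg Fin.val h
    simp only [hpa, hpb] at this
    omega
  set s : Equiv.Perm (Fin r) := Equiv.swap pa pb with hs
  -- ring relations
  have hxy : L i * L (i + 1) = L (i + 1) * L i :=
    hLL i (i + 1) h1 (by omega) (by omega) (by omega)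
  have htxt : T i * L i * T i = qb * L (i + 1) := hTLT i h1 (by omega)
  have ht2 : T i * T i = (qb - 1) * T i + qb := ht2_of_quad hc (hquad i h1 (by omega))
  have lyt := lyt_lemma hc hu' htxt ht2
  have lty := lty_lemma hc hu' htxt ht2
  have lxt : L i * T i = T i * L (i + 1) - (qb - 1) * L (i + 1) := eq_sub_of_add_eq lty.symm
  have lxyt := lxyt_lemma hc hxy lyt lty
  have l7 := l7_lemma hc hxy lxt lyt lxyt
  have xT : x * T i = qb * x := by
    rw [hx]; exact x_mul_T T hquad Tw hTwmul hTwgen i h1 h2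
  -- monomial machinery
  set Ap : (Fin r → Fin m) → H := fun β => ((List.range (i - 1)).map (gLf L β)).prod with hAp
  set Bp : (Fin r → Fin m) → H :=
    fun β => ((List.range (r - i - 1)).map (fun j => gLf L β (i + 1 + j))).prod with hBp
  have hsplit : ∀ β : Fin r → Fin m,
      akLmonF L β = Ap β * (L i ^ ((β pa : ℕ)) * L (i + 1) ^ ((β pb : ℕ))) * Bp β := by
    intro β
    rw [akLmonF_eq, prod_map_range_split (gLf L β) h1 h2]
    have e1 : gLf L β (i - 1) = L i ^ ((β pa : ℕ)) := by
      simp only [gLf]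
      rw [dif_pos (show i - 1 < r by omega), show i - 1 + 1 = i by omega]
    have e2 : gLf L β i = L (i + 1) ^ ((β pb : ℕ)) := by
      simp only [gLf]
      rw [dif_pos h2]
    rw [e1, e2, hAp, hBp]
  have hApBp : ∀ β β' : Fin r → Fin m, (∀ j : Fin r, j ≠ pa → j ≠ pb → β j = β' j) →
      Ap β = Ap β' ∧ Bp β = Bp β' := by
    intro β β' hoff
    constructor
    · apply congrArg List.prod
      apply List.map_congr_left
      intro j hj
      rw [List.mem_range] at hj
      have hjr : j < r := by omega
      simp only [gLf]
      rw [dif_pos hjr, dif_pos hjr]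
      have : β ⟨j, hjr⟩ = β' ⟨j, hjr⟩ := by
        apply hoff
        · exact Fin.ne_of_val_ne (show j ≠ i - 1 by omega)
        · exact Fin.ne_of_val_ne (show j ≠ i by omega)
      rw [this]
    · apply congrArg List.prod
      apply List.map_congr_left
      intro j hj
      rw [List.mem_range] at hj
      have hjr : i + 1 + j < r := by omega
      simp only [gLf]
      rw [dif_pos hjr, dif_pos hjr]
      have : β ⟨i + 1 + j, hjr⟩ = β' ⟨i + 1 + j, hjr⟩ := by
        apply hoff
        · exact Fin.ne_of_val_ne (show i + 1 + j ≠ i - 1 by omega)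
        · exact Fin.ne_of_val_ne (show i + 1 + j ≠ i by omega)
      rw [this]
  set toF : ℕ → Fin m := fun k => ⟨k % m, Nat.mod_lt _ hm⟩ with htoF
  have htoFval : ∀ k, k < m → ((toF k : Fin m) : ℕ) = k := by
    intro k hk
    simp only [htoF]
    exact Nat.mod_eq_of_lt hk
  set w2 : (Fin r → Fin m) → ℕ → (Fin r → Fin m) := fun β k => fun j =>
    if j = pa then toF k else if j = pb then toF ((β pa : ℕ) + (β pb : ℕ) - k) else β j
    with hw2
  have hw2pa : ∀ β k, w2 β k pa = toF k := by
    intro β k; simp [hw2]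
  have hw2pb : ∀ β k, w2 β k pb = toF ((β pa : ℕ) + (β pb : ℕ) - k) := by
    intro β k; simp [hw2, Ne.symm hpane]
  have hw2off : ∀ β k (j : Fin r), j ≠ pa → j ≠ pb → w2 β k j = β j := by
    intro β k j hj1 hj2; simp [hw2, hj1, hj2]
  have hcomp_pa : ∀ β : Fin r → Fin m, (β ∘ s) pa = β pb := by
    intro β; simp only [Function.comp_apply, hs, Equiv.swap_apply_left]
  have hcomp_pb : ∀ β : Fin r → Fin m, (β ∘ s) pb = β pa := by
    intro β; simp only [Function.comp_apply, hs, Equiv.swap_apply_right]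
  have hcomp_off : ∀ (β : Fin r → Fin m) (j : Fin r), j ≠ pa → j ≠ pb → (β ∘ s) j = β j := by
    intro β j hj1 hj2
    simp only [Function.comp_apply, hs]
    rw [Equiv.swap_apply_of_ne_of_ne hj1 hj2]
  have hss : ∀ β : Fin r → Fin m, (β ∘ s) ∘ s = β := by
    intro β; funext j
    simp only [Function.comp_apply, hs, Equiv.swap_apply_self]
  have hbij : Function.Bijective (fun β : Fin r → Fin m => β ∘ s) :=
    Function.Involutive.bijective hss
  -- the straightening law
  have moveT : ∀ β : Fin r → Fin m, (x * akLmonF L β) * T i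
      = qb * (x * akLmonF L (β ∘ s))
        + (qb - 1) * ((∑ k ∈ Finset.Ico ((β pa : ℕ)) ((β pb : ℕ)), x * akLmonF L (w2 β k))
          - (∑ k ∈ Finset.Ico ((β pb : ℕ)) ((β pa : ℕ)), x * akLmonF L (w2 β k))) := by
    intro β
    have ham : (β pa : ℕ) < m := (β pa).isLt
    have hb2m : (β pb : ℕ) < m := (β pb).isLt
    have hTA : Commute (T i) (Ap β) := by
      apply Commute.list_prod_right
      intro zz hzz
      rw [List.mem_map] at hzz
      obtain ⟨j, hj, rfl⟩ := hzz
      rw [List.mem_range] at hj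
      have hjr : j < r := by omega
      simp only [gLf]
      rw [dif_pos hjr]
      have hcomm : Commute (L (j + 1)) (T i) :=
        hLT i (j + 1) h1 (by omega) (by omega) (by omega) (by omega) (by omega)
      exact hcomm.symm.pow_right _
    have hTB : Commute (T i) (Bp β) := by
      apply Commute.list_prod_right
      intro zz hzz
      rw [List.mem_map] at hzz
      obtain ⟨j, hj, rfl⟩ := hzz
      rw [List.mem_range] at hj
      have hjr : i + 1 + j < r := by omega
      simp only [gLf]
      rw [dif_pos hjr]
      have hcomm : Commute (L (i + 1 + j + 1)) (T i) :=
        hLT i (i + 1 + j + 1) h1 (by omega) (by omega) (by omega) (by omega) (by omega)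
      exact hcomm.symm.pow_right _
    have key := l7 ((β pa : ℕ)) ((β pb : ℕ))
    have hsplits : akLmonF L (β ∘ s)
        = Ap β * (L i ^ ((β pb : ℕ)) * L (i + 1) ^ ((β pa : ℕ))) * Bp β := by
      rw [hsplit (β ∘ s)]
      obtain ⟨hA', hB'⟩ := hApBp (β ∘ s) β (hcomp_off β)
      rw [hA', hB', hcomp_pa, hcomp_pb]
    have hterm : ∀ k ∈ Finset.Ico ((β pa : ℕ)) ((β pb : ℕ)) ∪
          Finset.Ico ((β pb : ℕ)) ((β pa : ℕ)),
        Ap β * (L i ^ k * L (i + 1) ^ ((β pa : ℕ) + (β pb : ℕ) - k)) * Bp β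
          = akLmonF L (w2 β k) := by
      intro k hk
      rw [Finset.mem_union, Finset.mem_Ico, Finset.mem_Ico] at hk
      have hkm : k < m := by omega
      have hkm2 : (β pa : ℕ) + (β pb : ℕ) - k < m := by omega
      obtain ⟨hA', hB'⟩ := hApBp (w2 β k) β (hw2off β k)
      rw [hsplit (w2 β k), hA', hB', hw2pa, hw2pb, htoFval k hkm, htoFval _ hkm2]
    have hD : Ap β * ((∑ k ∈ Finset.Ico ((β pa : ℕ)) ((β pb : ℕ)),
          L i ^ k * L (i + 1) ^ ((β pa : ℕ) + (β pb : ℕ) - k))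
        - ∑ k ∈ Finset.Ico ((β pb : ℕ)) ((β pa : ℕ)),
          L i ^ k * L (i + 1) ^ ((β pa : ℕ) + (β pb : ℕ) - k)) * Bp β
        = (∑ k ∈ Finset.Ico ((β pa : ℕ)) ((β pb : ℕ)), akLmonF L (w2 β k))
          - ∑ k ∈ Finset.Ico ((β pb : ℕ)) ((β pa : ℕ)), akLmonF L (w2 β k) := by
      rw [mul_sub, sub_mul, Finset.mul_sum, Finset.mul_sum, Finset.sum_mul, Finset.sum_mul]
      congr 1
      · exact Finset.sum_congr rfl fun k hk => hterm k (Finset.mem_union_left _ hk)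
      · exact Finset.sum_congr rfl fun k hk => hterm k (Finset.mem_union_right _ hk)
    have hmonT : akLmonF L β * T i = T i * akLmonF L (β ∘ s)
        + (qb - 1) * ((∑ k ∈ Finset.Ico ((β pa : ℕ)) ((β pb : ℕ)), akLmonF L (w2 β k))
          - ∑ k ∈ Finset.Ico ((β pb : ℕ)) ((β pa : ℕ)), akLmonF L (w2 β k)) := by
      rw [hsplit β, hsplits, ← hD]
      calc Ap β * (L i ^ ((β pa : ℕ)) * L (i + 1) ^ ((β pb : ℕ))) * Bp β * T i
          = (Ap β * (L i ^ ((β pa : ℕ)) * L (i + 1) ^ ((β pb : ℕ)))) * (Bp β * T i) := by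
            rw [mul_assoc]
        _ = (Ap β * (L i ^ ((β pa : ℕ)) * L (i + 1) ^ ((β pb : ℕ)))) * (T i * Bp β) := by
            rw [← hTB.eq]
        _ = Ap β * ((L i ^ ((β pa : ℕ)) * L (i + 1) ^ ((β pb : ℕ))) * T i) * Bp β := by
            noncomm_ring
        _ = Ap β * (T i * (L i ^ ((β pb : ℕ)) * L (i + 1) ^ ((β pa : ℕ)))
              + (qb - 1) * ((∑ k ∈ Finset.Ico ((β pa : ℕ)) ((β pb : ℕ)),
                  L i ^ k * L (i + 1) ^ ((β pa : ℕ) + (β pb : ℕ) - k))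
                - ∑ k ∈ Finset.Ico ((β pb : ℕ)) ((β pa : ℕ)),
                  L i ^ k * L (i + 1) ^ ((β pa : ℕ) + (β pb : ℕ) - k))) * Bp β := by
            rw [key]
        _ = Ap β * (T i * (L i ^ ((β pb : ℕ)) * L (i + 1) ^ ((β pa : ℕ)))) * Bp β
              + Ap β * ((qb - 1) * ((∑ k ∈ Finset.Ico ((β pa : ℕ)) ((β pb : ℕ)),
                  L i ^ k * L (i + 1) ^ ((β pa : ℕ) + (β pb : ℕ) - k))
                - ∑ k ∈ Finset.Ico ((β pb : ℕ)) ((β pa : ℕ)),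
                  L i ^ k * L (i + 1) ^ ((β pa : ℕ) + (β pb : ℕ) - k))) * Bp β := by
            noncomm_ring
        _ = T i * (Ap β * (L i ^ ((β pb : ℕ)) * L (i + 1) ^ ((β pa : ℕ))) * Bp β)
              + (qb - 1) * (Ap β * ((∑ k ∈ Finset.Ico ((β pa : ℕ)) ((β pb : ℕ)),
                  L i ^ k * L (i + 1) ^ ((β pa : ℕ) + (β pb : ℕ) - k))
                - ∑ k ∈ Finset.Ico ((β pb : ℕ)) ((β pa : ℕ)),
                  L i ^ k * L (i + 1) ^ ((β pa : ℕ) + (β pb : ℕ) - k)) * Bp β) := by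
            rw [← mul_assoc (Ap β) (T i), ← hTA.eq, ← mul_assoc (Ap β) (qb - 1), ← ca (Ap β)]
            noncomm_ring
    calc (x * akLmonF L β) * T i = x * (akLmonF L β * T i) := by rw [mul_assoc]
      _ = x * (T i * akLmonF L (β ∘ s))
          + x * ((qb - 1) * ((∑ k ∈ Finset.Ico ((β pa : ℕ)) ((β pb : ℕ)), akLmonF L (w2 β k))
            - ∑ k ∈ Finset.Ico ((β pb : ℕ)) ((β pa : ℕ)), akLmonF L (w2 β k))) := by
          rw [hmonT, mul_add]
      _ = qb * (x * akLmonF L (β ∘ s))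
          + (qb - 1) * (x * ((∑ k ∈ Finset.Ico ((β pa : ℕ)) ((β pb : ℕ)), akLmonF L (w2 β k))
            - ∑ k ∈ Finset.Ico ((β pb : ℕ)) ((β pa : ℕ)), akLmonF L (w2 β k))) := by
          rw [← mul_assoc x (T i), xT, ← mul_assoc x (qb - 1), ← ca x]
          noncomm_ring
      _ = qb * (x * akLmonF L (β ∘ s))
          + (qb - 1) * ((∑ k ∈ Finset.Ico ((β pa : ℕ)) ((β pb : ℕ)), x * akLmonF L (w2 β k))
            - ∑ k ∈ Finset.Ico ((β pb : ℕ)) ((β pa : ℕ)), x * akLmonF L (w2 β k)) := by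
          rw [mul_sub, Finset.mul_sum, Finset.mul_sum]
  -- z is a right multiple of x, hence z * T i = qb * z
  have hzT : z * T i = qb * z := by
    obtain ⟨h0, hh0⟩ := hzright
    rw [hh0, mul_assoc, xT, ← mul_assoc, ← hc h0, mul_assoc]
  set Np : (Fin r → Fin m) → (Fin r → Fin m) → R := fun β' β =>
    ∑ k ∈ Finset.Ico ((β' pa : ℕ)) ((β' pb : ℕ)), (if β = w2 β' k then (1:R) else 0) with hNp
  set Nm : (Fin r → Fin m) → (Fin r → Fin m) → R := fun β' β =>
    ∑ k ∈ Finset.Ico ((β' pb : ℕ)) ((β' pa : ℕ)), (if β = w2 β' k then (1:R) else 0) with hNm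
  set g : (Fin r → Fin m) → R := fun β =>
    q * c (β ∘ s) - q * c β + (q - 1) * ∑ β' : Fin r → Fin m, c β' * (Np β' β - Nm β' β)
    with hg
  have hq1 : ∀ w : H, qb * w = q • w := fun w => (Algebra.smul_def q w).symm
  have hq2 : ∀ w : H, (qb - 1) * w = (q - 1) • w := by
    intro w
    rw [Algebra.smul_def, map_sub, map_one]
  have hpick : ∀ t : Fin r → Fin m,
      ∑ β : Fin r → Fin m, (if β = t then (1:R) else 0) • (x * akLmonF L β)
        = x * akLmonF L t := by
    intro t
    calc ∑ β : Fin r → Fin m, (if β = t then (1:R) else 0) • (x * akLmonF L β)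
        = ∑ β : Fin r → Fin m, (if β = t then x * akLmonF L β else 0) := by
          apply Finset.sum_congr rfl
          intro β _
          split_ifs with h
          · rw [one_smul]
          · rw [zero_smul]
      _ = if t ∈ Finset.univ then x * akLmonF L t else 0 :=
          Finset.sum_ite_eq' Finset.univ t (fun β => x * akLmonF L β)
      _ = x * akLmonF L t := if_pos (Finset.mem_univ t)
  have hcorP : ∀ β' : Fin r → Fin m,
      (∑ β : Fin r → Fin m, Np β' β • (x * akLmonF L β))
        = ∑ k ∈ Finset.Ico ((β' pa : ℕ)) ((β' pb : ℕ)), x * akLmonF L (w2 β' k) := by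
    intro β'
    simp only [hNp]
    calc ∑ β : Fin r → Fin m, (∑ k ∈ Finset.Ico ((β' pa : ℕ)) ((β' pb : ℕ)),
            if β = w2 β' k then (1:R) else 0) • (x * akLmonF L β)
        = ∑ β : Fin r → Fin m, ∑ k ∈ Finset.Ico ((β' pa : ℕ)) ((β' pb : ℕ)),
            (if β = w2 β' k then (1:R) else 0) • (x * akLmonF L β) := by
          exact Finset.sum_congr rfl fun β _ => Finset.sum_smul
      _ = ∑ k ∈ Finset.Ico ((β' pa : ℕ)) ((β' pb : ℕ)), ∑ β : Fin r → Fin m,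
            (if β = w2 β' k then (1:R) else 0) • (x * akLmonF L β) := Finset.sum_comm
      _ = ∑ k ∈ Finset.Ico ((β' pa : ℕ)) ((β' pb : ℕ)), x * akLmonF L (w2 β' k) :=
          Finset.sum_congr rfl fun k _ => hpick (w2 β' k)
  have hcorM : ∀ β' : Fin r → Fin m,
      (∑ β : Fin r → Fin m, Nm β' β • (x * akLmonF L β))
        = ∑ k ∈ Finset.Ico ((β' pb : ℕ)) ((β' pa : ℕ)), x * akLmonF L (w2 β' k) := by
    intro β'
    simp only [hNm]
    calc ∑ β : Fin r → Fin m, (∑ k ∈ Finset.Ico ((β' pb : ℕ)) ((β' pa : ℕ)),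
            if β = w2 β' k then (1:R) else 0) • (x * akLmonF L β)
        = ∑ β : Fin r → Fin m, ∑ k ∈ Finset.Ico ((β' pb : ℕ)) ((β' pa : ℕ)),
            (if β = w2 β' k then (1:R) else 0) • (x * akLmonF L β) := by
          exact Finset.sum_congr rfl fun β _ => Finset.sum_smul
      _ = ∑ k ∈ Finset.Ico ((β' pb : ℕ)) ((β' pa : ℕ)), ∑ β : Fin r → Fin m,
            (if β = w2 β' k then (1:R) else 0) • (x * akLmonF L β) := Finset.sum_comm
      _ = ∑ k ∈ Finset.Ico ((β' pb : ℕ)) ((β' pa : ℕ)), x * akLmonF L (w2 β' k) :=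
          Finset.sum_congr rfl fun k _ => hpick (w2 β' k)
  have hzsum : ∑ β : Fin r → Fin m, c β • ((x * akLmonF L β) * T i) = qb * z := by
    rw [← hzT, hz, Finset.sum_mul]
    exact Finset.sum_congr rfl fun β _ => (smul_mul_assoc _ _ _).symm
  have hzsum2 : ∑ β : Fin r → Fin m, c β • ((x * akLmonF L β) * T i)
      = (∑ β : Fin r → Fin m, (q * c β) • (x * akLmonF L (β ∘ s)))
        + ∑ β' : Fin r → Fin m, ((q - 1) * c β') •
            ((∑ k ∈ Finset.Ico ((β' pa : ℕ)) ((β' pb : ℕ)), x * akLmonF L (w2 β' k))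
              - ∑ k ∈ Finset.Ico ((β' pb : ℕ)) ((β' pa : ℕ)), x * akLmonF L (w2 β' k)) := by
    rw [← Finset.sum_add_distrib]
    apply Finset.sum_congr rfl
    intro β _
    rw [moveT β, hq1, hq2, smul_add, smul_smul, smul_smul,
      mul_comm (c β) q, mul_comm (c β) (q - 1)]
  have hgsum : ∑ β : Fin r → Fin m, g β • (x * akLmonF L β) = 0 := by
    simp only [hg]
    have e1 : ∀ β : Fin r → Fin m,
        (q * c (β ∘ s) - q * c β
          + (q - 1) * ∑ β' : Fin r → Fin m, c β' * (Np β' β - Nm β' β))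
            • (x * akLmonF L β)
        = (q * c (β ∘ s)) • (x * akLmonF L β) - (q * c β) • (x * akLmonF L β)
          + ((q - 1) * ∑ β' : Fin r → Fin m, c β' * (Np β' β - Nm β' β))
            • (x * akLmonF L β) := by
      intro β
      rw [add_smul, sub_smul]
    rw [Finset.sum_congr rfl fun β _ => e1 β, Finset.sum_add_distrib,
      Finset.sum_sub_distrib]
    have p1 : ∑ β : Fin r → Fin m, (q * c (β ∘ s)) • (x * akLmonF L β)
        = ∑ β : Fin r → Fin m, (q * c β) • (x * akLmonF L (β ∘ s)) := by
      rw [← hbij.sum_comp (fun γ => (q * c (γ ∘ s)) • (x * akLmonF L γ))]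
      apply Finset.sum_congr rfl
      intro β _
      rw [hss β]
    have p2 : ∑ β : Fin r → Fin m, (q * c β) • (x * akLmonF L β) = qb * z := by
      calc ∑ β : Fin r → Fin m, (q * c β) • (x * akLmonF L β)
          = ∑ β : Fin r → Fin m, q • (c β • (x * akLmonF L β)) := by
            exact Finset.sum_congr rfl fun β _ => (smul_smul q (c β) _).symm
        _ = q • ∑ β : Fin r → Fin m, c β • (x * akLmonF L β) := Finset.smul_sum.symm
        _ = q • z := by rw [← hz]
        _ = qb * z := Algebra.smul_def q z
    have p3 : ∑ β : Fin r → Fin m,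
        ((q - 1) * ∑ β' : Fin r → Fin m, c β' * (Np β' β - Nm β' β))
          • (x * akLmonF L β)
        = ∑ β' : Fin r → Fin m, ((q - 1) * c β') •
            ((∑ k ∈ Finset.Ico ((β' pa : ℕ)) ((β' pb : ℕ)), x * akLmonF L (w2 β' k))
              - ∑ k ∈ Finset.Ico ((β' pb : ℕ)) ((β' pa : ℕ)), x * akLmonF L (w2 β' k)) := by
      calc ∑ β : Fin r → Fin m,
          ((q - 1) * ∑ β' : Fin r → Fin m, c β' * (Np β' β - Nm β' β))
            • (x * akLmonF L β)
          = ∑ β : Fin r → Fin m, ∑ β' : Fin r → Fin m,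
              (((q - 1) * c β') * (Np β' β - Nm β' β)) • (x * akLmonF L β) := by
            apply Finset.sum_congr rfl
            intro β _
            rw [Finset.mul_sum, Finset.sum_smul]
            exact Finset.sum_congr rfl fun β' _ => by rw [mul_assoc]
        _ = ∑ β' : Fin r → Fin m, ∑ β : Fin r → Fin m,
              (((q - 1) * c β') * (Np β' β - Nm β' β)) • (x * akLmonF L β) :=
            Finset.sum_comm
        _ = ∑ β' : Fin r → Fin m, ((q - 1) * c β') •
              ∑ β : Fin r → Fin m, (Np β' β - Nm β' β) • (x * akLmonF L β) := by
            apply Finset.sum_congr rfl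
            intro β' _
            rw [Finset.smul_sum]
            exact Finset.sum_congr rfl fun β _ => (smul_smul _ _ _).symm
        _ = ∑ β' : Fin r → Fin m, ((q - 1) * c β') •
            ((∑ k ∈ Finset.Ico ((β' pa : ℕ)) ((β' pb : ℕ)), x * akLmonF L (w2 β' k))
              - ∑ k ∈ Finset.Ico ((β' pb : ℕ)) ((β' pa : ℕ)), x * akLmonF L (w2 β' k)) := by
            apply Finset.sum_congr rfl
            intro β' _
            congr 1
            calc ∑ β : Fin r → Fin m, (Np β' β - Nm β' β) • (x * akLmonF L β)
                = (∑ β : Fin r → Fin m, Np β' β • (x * akLmonF L β))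
                  - ∑ β : Fin r → Fin m, Nm β' β • (x * akLmonF L β) := by
                  rw [← Finset.sum_sub_distrib]
                  exact Finset.sum_congr rfl fun β _ => sub_smul _ _ _
              _ = _ := by rw [hcorP β', hcorM β']
    rw [p1, p2, p3]
    have hfinal : (∑ β : Fin r → Fin m, (q * c β) • (x * akLmonF L (β ∘ s)))
        + ∑ β' : Fin r → Fin m, ((q - 1) * c β') •
            ((∑ k ∈ Finset.Ico ((β' pa : ℕ)) ((β' pb : ℕ)), x * akLmonF L (w2 β' k))
              - ∑ k ∈ Finset.Ico ((β' pb : ℕ)) ((β' pa : ℕ)), x * akLmonF L (w2 β' k))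
        = qb * z := by rw [← hzsum2, hzsum]
    rw [← hfinal]
    abel
  have hg0 : ∀ β : Fin r → Fin m, g β = 0 :=
    Fintype.linearIndependent_iff.mp hxLI g hgsum
  -- symmetrize the correction coefficients
  have hw2s : ∀ (β' : Fin r → Fin m) k, w2 (β' ∘ s) k = w2 β' k := by
    intro β' k
    funext j
    simp only [hw2]
    by_cases hj1 : j = pa
    · rw [if_pos hj1, if_pos hj1]
    · rw [if_neg hj1, if_neg hj1]
      by_cases hj2 : j = pb
      · rw [if_pos hj2, if_pos hj2, hcomp_pa, hcomp_pb]
        congr 1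
        omega
      · rw [if_neg hj2, if_neg hj2, hcomp_off β' j hj1 hj2]
  have hNmNp : ∀ β' β : Fin r → Fin m, Nm β' β = Np (β' ∘ s) β := by
    intro β' β
    simp only [hNp, hNm, hcomp_pa, hcomp_pb, hw2s]
  have hstar : ∀ β : Fin r → Fin m,
      q * (c β - c (β ∘ s))
        = (q - 1) * ∑ β' : Fin r → Fin m, (c β' - c (β' ∘ s)) * Np β' β := by
    intro β
    have h0 : g β = 0 := hg0 β
    simp only [hg] at h0
    have e2 : ∑ β' : Fin r → Fin m, c β' * Nm β' β
        = ∑ β' : Fin r → Fin m, c (β' ∘ s) * Np β' β := by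
      calc ∑ β' : Fin r → Fin m, c β' * Nm β' β
          = ∑ β' : Fin r → Fin m, c β' * Np (β' ∘ s) β :=
            Finset.sum_congr rfl fun β' _ => by rw [hNmNp]
        _ = ∑ β' : Fin r → Fin m, c (β' ∘ s) * Np ((β' ∘ s) ∘ s) β :=
            (hbij.sum_comp fun γ => c γ * Np (γ ∘ s) β).symm
        _ = ∑ β' : Fin r → Fin m, c (β' ∘ s) * Np β' β :=
            Finset.sum_congr rfl fun β' _ => by rw [hss β']
    have e1 : ∑ β' : Fin r → Fin m, c β' * (Np β' β - Nm β' β)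
        = ∑ β' : Fin r → Fin m, (c β' - c (β' ∘ s)) * Np β' β := by
      rw [Finset.sum_congr rfl fun β' _ => mul_sub (c β') (Np β' β) (Nm β' β),
        Finset.sum_sub_distrib, e2, ← Finset.sum_sub_distrib]
      exact Finset.sum_congr rfl fun β' _ => by ring
    rw [e1] at h0
    linear_combination -h0
  -- combinatorial facts about w2
  have hw2self : ∀ β' : Fin r → Fin m, ((β' pa : ℕ)) < ((β' pb : ℕ)) →
      w2 β' ((β' pa : ℕ)) = β' := by
    intro β' hlt
    funext j
    simp only [hw2]
    by_cases hj1 : j = pa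
    · rw [if_pos hj1, hj1]
      apply Fin.ext
      rw [htoFval _ (β' pa).isLt]
    · rw [if_neg hj1]
      by_cases hj2 : j = pb
      · rw [if_pos hj2, hj2]
        have e : ((β' pa : ℕ)) + ((β' pb : ℕ)) - ((β' pa : ℕ)) = ((β' pb : ℕ)) := by omega
        rw [e]
        apply Fin.ext
        rw [htoFval _ (β' pb).isLt]
      · rw [if_neg hj2]
  have hK1 : ∀ β' β : Fin r → Fin m, Np β' β ≠ 0 →
      ∃ k, k ∈ Finset.Ico ((β' pa : ℕ)) ((β' pb : ℕ)) ∧ β = w2 β' k := by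
    intro β' β h0
    by_contra hcon
    push_neg at hcon
    apply h0
    simp only [hNp]
    apply Finset.sum_eq_zero
    intro k hk
    rw [if_neg (hcon k hk)]
  have hdist : ∀ (β' : Fin r → Fin m) k, k ∈ Finset.Ico ((β' pa : ℕ)) ((β' pb : ℕ)) →
      k ≠ ((β' pa : ℕ)) →
      Nat.dist ((w2 β' k pa : ℕ)) ((w2 β' k pb : ℕ)) + 1
        ≤ Nat.dist ((β' pa : ℕ)) ((β' pb : ℕ)) := by
    intro β' k hk hkne
    rw [Finset.mem_Ico] at hk
    have hb2m : ((β' pb : ℕ)) < m := (β' pb).isLt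
    have ham : ((β' pa : ℕ)) < m := (β' pa).isLt
    rw [hw2pa, hw2pb, htoFval k (by omega), htoFval _ (by omega)]
    simp only [Nat.dist]
    omega
  have hdlt : ∀ β : Fin r → Fin m, Nat.dist ((β pa : ℕ)) ((β pb : ℕ)) < m := by
    intro β
    have h1' := (β pa).isLt
    have h2' := (β pb).isLt
    simp only [Nat.dist]
    omega
  -- the downward induction on the gap
  have main : ∀ t : ℕ, ∀ β : Fin r → Fin m,
      m ≤ Nat.dist ((β pa : ℕ)) ((β pb : ℕ)) + t → c β - c (β ∘ s) = 0 := by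
    intro t
    induction t with
    | zero =>
      intro β hβ
      exact absurd hβ (by have := hdlt β; omega)
    | succ t ih =>
      intro β hβ
      have hstarβ := hstar β
      have hsum : ∑ β' : Fin r → Fin m, (c β' - c (β' ∘ s)) * Np β' β
          = (c β - c (β ∘ s)) * Np β β := by
        apply Finset.sum_eq_single_of_mem β (Finset.mem_univ β)
        intro β' _ hβ'ne
        rcases eq_or_ne (Np β' β) 0 with h0 | h0
        · rw [h0, mul_zero]
        · obtain ⟨k, hk, hβk⟩ := hK1 β' β h0
          rcases eq_or_ne k ((β' pa : ℕ)) with hka | hkne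
          · exfalso
            apply hβ'ne
            have hlt' : ((β' pa : ℕ)) < ((β' pb : ℕ)) := by
              rw [Finset.mem_Ico] at hk; omega
            rw [hβk, hka, hw2self β' hlt']
          · have hd := hdist β' k hk hkne
            have hz' : c β' - c (β' ∘ s) = 0 := by
              apply ih
              have hdd : Nat.dist ((β pa : ℕ)) ((β pb : ℕ)) + 1
                  ≤ Nat.dist ((β' pa : ℕ)) ((β' pb : ℕ)) := by rw [hβk]; exact hd
              omega
            rw [hz', zero_mul]
      rcases Nat.lt_or_ge ((β pa : ℕ)) ((β pb : ℕ)) with hlt | hge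
      · have hNp1 : Np β β = 1 := by
          simp only [hNp]
          have hmem : ((β pa : ℕ)) ∈ Finset.Ico ((β pa : ℕ)) ((β pb : ℕ)) :=
            Finset.mem_Ico.2 ⟨le_refl _, hlt⟩
          have hother : ∀ k ∈ Finset.Ico ((β pa : ℕ)) ((β pb : ℕ)), k ≠ ((β pa : ℕ)) →
              (if β = w2 β k then (1:R) else 0) = 0 := by
            intro k hk hkne
            rw [Finset.mem_Ico] at hk
            have hb2m : ((β pb : ℕ)) < m := (β pb).isLt
            rw [if_neg]
            intro hcon
            apply hkne
            have hval := congrArg (fun f : Fin r → Fin m => ((f pa : ℕ))) hcon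
            rw [hw2pa, htoFval k (by omega)] at hval
            exact hval.symm
          rw [Finset.sum_eq_single_of_mem _ hmem hother,
            if_pos (hw2self β hlt).symm]
        rw [hsum, hNp1, mul_one] at hstarβ
        linear_combination hstarβ
      · have hNp0 : Np β β = 0 := by
          simp only [hNp]
          rw [Finset.Ico_eq_empty (by omega), Finset.sum_empty]
        rw [hsum, hNp0, mul_zero, mul_zero] at hstarβ
        exact (IsUnit.mul_right_eq_zero hq).1 hstarβ
  intro b
  have hfin := main m b (by omega)
  exact (sub_eq_zero.mp hfin).symm

end AKaux

/-- Suppose `z = Σ_{b ∈ (ℤ/m)^r} c_b x_{(r)} L^b` lies in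
`x_{(r)}H_u(r) ∩ H_u(r)x_{(r)}`, where `x_{(r)} = Σ_{w ∈ S_r} T_w`.  Then the
coefficients are symmetric: `c_b = c_{b·w}` for all `b` and all `w ∈ S_r`. -/

theorem ariki_koike_symmetric_coefficients
    (R : Type) [CommRing R] (q : R) (hq : IsUnit q) (m r : ℕ) (hm : 0 < m)
    (u : Fin m → R)
    (H : Type) [Ring H] [Algebra R H]
    (T L : ℕ → H)
    (hquad : ∀ i, 1 ≤ i → i ≤ r - 1 → (T i + 1) * (T i - algebraMap R H q) = 0)
    (hbraid : ∀ i, 1 ≤ i → i + 1 ≤ r - 1 → T i * T (i + 1) * T i = T (i + 1) * T i * T (i + 1))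
    (hTT : ∀ i j, 1 ≤ i → j ≤ r - 1 → i + 1 < j → T i * T j = T j * T i)
    (hLL : ∀ i j, 1 ≤ i → i ≤ r → 1 ≤ j → j ≤ r → L i * L j = L j * L i)
    (hcyclo : (List.ofFn (fun k : Fin m => L 1 - algebraMap R H (u k))).prod = 0)
    (hTLT : ∀ i, 1 ≤ i → i ≤ r - 1 → T i * L i * T i = algebraMap R H q * L (i + 1))
    (hLT : ∀ i j, 1 ≤ i → i ≤ r - 1 → 1 ≤ j → j ≤ r → j ≠ i → j ≠ i + 1 →
      L j * T i = T i * L j)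
    -- the elements `T_w`, `w ∈ S_r`
    (Tw : Equiv.Perm (Fin r) → H)
    (hTw1 : Tw 1 = 1)
    (hTwmul : ∀ w w' : Equiv.Perm (Fin r), permLen (w * w') = permLen w + permLen w' →
      Tw (w * w') = Tw w * Tw w')
    (hTwgen : ∀ (i : ℕ) (h1 : 1 ≤ i) (h2 : i < r),
      Tw (Equiv.swap ⟨i - 1, by omega⟩ ⟨i, h2⟩) = T i)
    -- `x_{(r)} = Σ_{w ∈ S_r} T_w`
    (x : H) (hx : x = ∑ w : Equiv.Perm (Fin r), Tw w)
    -- `{x_{(r)} L^b : b ∈ (ℤ/m)^r}` is an `R`-basis of `x_{(r)}H_u(r)`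
    (hxLI : LinearIndependent R (fun b : Fin r → Fin m => x * akLmonF L b))
    (c : (Fin r → Fin m) → R)
    (z : H) (hz : z = ∑ b : Fin r → Fin m, c b • (x * akLmonF L b))
    -- `z ∈ H_u(r) x_{(r)}` (membership in `x_{(r)} H_u(r)` holds by the shape of `z`)
    (hzright : ∃ h : H, z = h * x) :
    ∀ (b : Fin r → Fin m) (w : Equiv.Perm (Fin r)), c (b ∘ w) = c b := by
  intro b w
  rcases Nat.eq_zero_or_pos r with hr0 | hrpos
  · congr 1
    funext j
    exact absurd j.isLt (by omega)
  · obtain ⟨n, rfl⟩ : ∃ n, r = n + 1 := ⟨r - 1, by omega⟩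
    have key : ∀ (j : Fin n) (b : Fin (n + 1) → Fin m),
        c (b ∘ (Equiv.swap j.castSucc j.succ)) = c b := by
      intro j b
      have h2 : (j : ℕ) + 1 < n + 1 := by omega
      have hk := AKaux.key_adjacent R q hq m (n + 1) hm H T L hquad hLL hTLT hLT
        Tw hTwmul hTwgen x hx hxLI c z hz hzright ((j : ℕ) + 1) (by omega) h2 b
      have e1 : (⟨(j : ℕ) + 1 - 1, by omega⟩ : Fin (n + 1)) = j.castSucc :=
        Fin.ext (by simp)
      have e2 : (⟨(j : ℕ) + 1, h2⟩ : Fin (n + 1)) = j.succ := Fin.ext (by simp)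
      rw [e1, e2] at hk
      exact hk
    have hmem : w ∈ Submonoid.closure
        (Set.range fun j : Fin n => Equiv.swap j.castSucc j.succ) := by
      rw [Equiv.Perm.mclosure_swap_castSucc_succ]
      exact Submonoid.mem_top w
    have hall : ∀ b' : Fin (n + 1) → Fin m, c (b' ∘ ⇑w) = c b' := by
      refine Submonoid.closure_induction
        (motive := fun (w : Equiv.Perm (Fin (n + 1))) _ => ∀ b' : Fin (n + 1) → Fin m, c (b' ∘ ⇑w) = c b') ?_ ?_ ?_ hmem
      · rintro w' ⟨j, rfl⟩ b'
        exact key j b'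
      · intro b'
        have e : b' ∘ ⇑(1 : Equiv.Perm (Fin (n + 1))) = b' := by funext j; rfl
        rw [e]
      · intro w1 w2 _ _ ih1 ih2 b'
        have e : b' ∘ ⇑(w1 * w2) = (b' ∘ ⇑w1) ∘ ⇑w2 := by funext j; rfl
        rw [e, ih2 (b' ∘ ⇑w1), ih1 b']
    exact hall b
end

section
/- In the type B Weyl group W = S_{2,r}, for 1 ≤ i ≤ r one has d_i^{−1} S_r d_i ∩ S_r = S_{{1,…,i}} × S_{{i+1,…,r}}, the Young subgroup of S_r generated by {s_1,…,s_{i−1}, s_{i+1},…,s_{r−1}}, and d_0^{−1} S_r d_0 ∩ S_r = S_r. -/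
private lemma tbciy_swap_lt {j a b : ℕ} (hab : a < b) (hne : ¬(a = j ∧ b = j+1)) :
    Equiv.swap j (j+1) a < Equiv.swap j (j+1) b := by
  simp only [Equiv.swap_apply_def]
  split_ifs <;> omega

private lemma tbciy_swap_lt_r {r j a : ℕ} (hj : j + 1 < r) (ha : a < r) :
    Equiv.swap j (j+1) a < r := by
  simp only [Equiv.swap_apply_def]
  split_ifs <;> omega

private lemma tbciy_swap_self (j a : ℕ) :
    Equiv.swap j (j+1) (Equiv.swap j (j+1) a) = a := Equiv.swap_apply_self _ _ _

private def tbciyNinv (r : ℕ) (σ : Equiv.Perm ℕ) : ℕ :=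
  ((Finset.range r ×ˢ Finset.range r).filter fun p => p.1 < p.2 ∧ σ p.2 < σ p.1).card

private lemma tbciy_inv_descent {r j : ℕ} (σ : Equiv.Perm ℕ) (hj : j + 1 < r)
    (hdesc : σ (j+1) < σ j) :
    tbciyNinv r (σ * Equiv.swap j (j+1)) + 1 = tbciyNinv r σ := by
  classical
  set S : Finset (ℕ × ℕ) :=
    ((Finset.range r ×ˢ Finset.range r).filter fun p => p.1 < p.2 ∧ σ p.2 < σ p.1) with hS
  set S' : Finset (ℕ × ℕ) :=
    ((Finset.range r ×ˢ Finset.range r).filter fun p => p.1 < p.2 ∧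
      (σ * Equiv.swap j (j+1)) p.2 < (σ * Equiv.swap j (j+1)) p.1) with hS'
  have hmemS : ∀ p : ℕ × ℕ, p ∈ S ↔ p.1 < r ∧ p.2 < r ∧ p.1 < p.2 ∧ σ p.2 < σ p.1 := by
    intro p
    simp [hS, Finset.mem_filter, Finset.mem_product, and_assoc]
  have hmemS' : ∀ p : ℕ × ℕ, p ∈ S' ↔ p.1 < r ∧ p.2 < r ∧ p.1 < p.2 ∧
      σ (Equiv.swap j (j+1) p.2) < σ (Equiv.swap j (j+1) p.1) := by
    intro p
    rw [hS', Finset.mem_filter]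
    simp [Finset.mem_product, and_assoc, Equiv.Perm.mul_apply]
  have hjj_mem : (j, j+1) ∈ S := by
    rw [hmemS]; exact ⟨by omega, hj, by omega, hdesc⟩
  have hcard : S'.card = (S.erase (j, j+1)).card := by
    apply Finset.card_bij' (fun p _ => (Equiv.swap j (j+1) p.1, Equiv.swap j (j+1) p.2))
      (fun q _ => (Equiv.swap j (j+1) q.1, Equiv.swap j (j+1) q.2))
    · intro p hp
      rw [hmemS'] at hp
      obtain ⟨h1, h2, h3, h4⟩ := hp
      have hpne : ¬(p.1 = j ∧ p.2 = j+1) := by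
        rintro ⟨e1, e2⟩
        rw [e1, e2] at h4
        rw [Equiv.swap_apply_right, Equiv.swap_apply_left] at h4
        omega
      have hlt := tbciy_swap_lt h3 hpne
      rw [Finset.mem_erase, hmemS]
      refine ⟨?_, tbciy_swap_lt_r hj h1, tbciy_swap_lt_r hj h2, hlt, h4⟩
      intro hcontra
      have e1 : Equiv.swap j (j+1) p.1 = j := congrArg Prod.fst hcontra
      have e2 : Equiv.swap j (j+1) p.2 = j + 1 := congrArg Prod.snd hcontra
      have : p.1 = j + 1 := by
        have := congrArg (Equiv.swap j (j+1)) e1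
        rwa [tbciy_swap_self, Equiv.swap_apply_left] at this
      have : p.2 = j := by
        have := congrArg (Equiv.swap j (j+1)) e2
        rwa [tbciy_swap_self, Equiv.swap_apply_right] at this
      omega
    · intro q hq
      rw [Finset.mem_erase, hmemS] at hq
      obtain ⟨hne, h1, h2, h3, h4⟩ := hq
      have hqne : ¬(q.1 = j ∧ q.2 = j+1) := by
        rintro ⟨e1, e2⟩; exact hne (by cases q; simp_all)
      have hlt := tbciy_swap_lt h3 hqne
      rw [hmemS']
      refine ⟨tbciy_swap_lt_r hj h1, tbciy_swap_lt_r hj h2, hlt, ?_⟩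
      rw [tbciy_swap_self, tbciy_swap_self]
      exact h4
    · intro p _; simp [tbciy_swap_self]
    · intro q _; simp [tbciy_swap_self]
  have := Finset.card_erase_add_one hjj_mem
  unfold tbciyNinv
  rw [← hS, ← hS', hcard]
  omega

private lemma tbciy_blockid (σ : Equiv.Perm ℕ) (lo hi : ℕ)
    (hmaps : ∀ a, lo ≤ a → a < hi → lo ≤ σ a ∧ σ a < hi)
    (hmono : ∀ j, lo ≤ j → j + 1 < hi → σ j < σ (j+1)) :
    ∀ a, lo ≤ a → a < hi → σ a = a := by
  have up : ∀ a, lo ≤ a → a < hi → a ≤ σ a := by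
    intro a
    induction a using Nat.strong_induction_on with
    | _ a ih =>
      intro ha1 ha2
      rcases Nat.eq_or_lt_of_le ha1 with h | h
      · exact h ▸ (hmaps lo le_rfl (h ▸ ha2)).1
      · have h1 := ih (a-1) (by omega) (by omega) (by omega)
        have h2 := hmono (a-1) (by omega) (by omega)
        have : (a-1)+1 = a := by omega
        rw [this] at h2
        omega
  have down : ∀ t, ∀ a, lo ≤ a → a < hi → hi - 1 - a = t → σ a ≤ a := by
    intro t
    induction t using Nat.strong_induction_on with
    | _ t ih =>
      intro a ha1 ha2 hat
      by_cases hc : a = hi - 1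
      · have := (hmaps a ha1 ha2).2; omega
      · have h2 := hmono a ha1 (by omega)
        have h3 := ih (hi - 1 - (a+1)) (by omega) (a+1) (by omega) (by omega) rfl
        omega
  intro a ha1 ha2
  have := up a ha1 ha2
  have := down (hi - 1 - a) a ha1 ha2 rfl
  omega
set_option maxHeartbeats 1000000

private def tbciySgn : Equiv.Perm (ℕ × Bool) := Equiv.swap (0, true) (0, false)

private def tbciySw (k : ℕ) : Equiv.Perm (ℕ × Bool) :=
  Equiv.prodCongr (Equiv.swap k (k+1)) (Equiv.refl Bool)

private lemma tbciySw_apply (k : ℕ) (p : ℕ × Bool) :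
    tbciySw k p = (Equiv.swap k (k+1) p.1, p.2) := rfl

private lemma tbciySgn_apply (p : ℕ × Bool) :
    tbciySgn p = if p.1 = 0 then (0, !p.2) else p := by
  obtain ⟨a, b⟩ := p
  by_cases h : a = 0
  · subst h
    cases b <;> simp [tbciySgn, Equiv.swap_apply_def]
  · simp only [tbciySgn]
    rw [Equiv.swap_apply_of_ne_of_ne] <;> simp [h]

private lemma tbciySgn_sq : tbciySgn * tbciySgn = 1 := Equiv.swap_mul_self _ _

private lemma tbciySw_sq (k : ℕ) : tbciySw k * tbciySw k = 1 := by
  have h1 : ∀ p : ℕ × Bool, (tbciySw k * tbciySw k) p = (1 : Equiv.Perm (ℕ × Bool)) p := by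
    intro p
    simp [Equiv.Perm.mul_apply, tbciySw_apply]
  exact Equiv.ext h1

private lemma tbciySw_comm {k l : ℕ} (h : k + 2 ≤ l) :
    tbciySw k * tbciySw l = tbciySw l * tbciySw k := by
  have h1 : ∀ p : ℕ × Bool, (tbciySw k * tbciySw l) p = (tbciySw l * tbciySw k) p := by
    intro p
    simp only [Equiv.Perm.mul_apply, tbciySw_apply, Equiv.swap_apply_def, Prod.mk.injEq]
    refine ⟨?_, trivial⟩
    split_ifs <;> omega
  exact Equiv.ext h1

private lemma tbciySgn_comm {k : ℕ} (h : 1 ≤ k) :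
    tbciySgn * tbciySw k = tbciySw k * tbciySgn := by
  have h1 : ∀ p : ℕ × Bool, (tbciySgn * tbciySw k) p = (tbciySw k * tbciySgn) p := by
    intro ⟨a, b⟩
    simp only [Equiv.Perm.mul_apply, tbciySw_apply, tbciySgn_apply, Equiv.swap_apply_def]
    split_ifs <;> simp_all <;> omega
  exact Equiv.ext h1

private lemma tbciy_braid_step (k : ℕ) (p : ℕ × Bool) :
    (tbciySw k * tbciySw (k+1)) p =
      if p.1 = k then (k+1, p.2) else if p.1 = k+1 then (k+2, p.2)
        else if p.1 = k+2 then (k, p.2) else p := by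
  obtain ⟨a, b⟩ := p
  simp only [Equiv.Perm.mul_apply, tbciySw_apply, Equiv.swap_apply_def]
  split_ifs <;> (try rfl) <;> (simp only [Prod.mk.injEq]; exact ⟨by omega, by trivial⟩)

private lemma tbciySw_braid (k : ℕ) :
    (tbciySw k * tbciySw (k+1)) ^ 3 = 1 := by
  have e : (tbciySw k * tbciySw (k+1)) ^ 3 =
      (tbciySw k * tbciySw (k+1)) * ((tbciySw k * tbciySw (k+1)) *
        (tbciySw k * tbciySw (k+1))) := by
    rw [pow_succ, pow_succ, pow_one]; group
  rw [e]
  generalize hG : tbciySw k * tbciySw (k+1) = g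
  have hstep : ∀ p : ℕ × Bool, g p =
      if p.1 = k then (k+1, p.2) else if p.1 = k+1 then (k+2, p.2)
        else if p.1 = k+2 then (k, p.2) else p := by
    rw [← hG]; exact tbciy_braid_step k
  have hne1 : k + 1 ≠ k := by omega
  have hne2 : k + 2 ≠ k := by omega
  have hne3 : k + 2 ≠ k + 1 := by omega
  have h1 : ∀ p : ℕ × Bool, (g * (g * g)) p = (1 : Equiv.Perm (ℕ × Bool)) p := by
    intro ⟨a, b⟩
    by_cases e1 : a = k
    · subst e1; simp [Equiv.Perm.mul_apply, hstep, hne1, hne2, hne3]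
    · by_cases e2 : a = k + 1
      · subst e2; simp [Equiv.Perm.mul_apply, hstep, hne1, hne2, hne3]
      · by_cases e3 : a = k + 2
        · subst e3; simp [Equiv.Perm.mul_apply, hstep, hne1, hne2, hne3]
        · simp [Equiv.Perm.mul_apply, hstep, e1, e2, e3]
  exact Equiv.ext h1

private lemma tbciy_four_step (p : ℕ × Bool) :
    ((tbciySgn * tbciySw 0) * (tbciySgn * tbciySw 0)) p =
      if p.1 ≤ 1 then (p.1, !p.2) else p := by
  obtain ⟨a, b⟩ := p
  by_cases e1 : a = 0
  · subst e1
    simp [Equiv.Perm.mul_apply, tbciySw_apply, tbciySgn_apply, Equiv.swap_apply_def]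
  · by_cases e2 : a = 1
    · subst e2
      simp [Equiv.Perm.mul_apply, tbciySw_apply, tbciySgn_apply, Equiv.swap_apply_def]
    · have e3 : ¬(a ≤ 1) := by omega
      simp [Equiv.Perm.mul_apply, tbciySw_apply, tbciySgn_apply, Equiv.swap_apply_def,
        e1, e2, e3]

private lemma tbciy_four : (tbciySgn * tbciySw 0) ^ 4 = 1 := by
  have e : (tbciySgn * tbciySw 0) ^ 4 =
      ((tbciySgn * tbciySw 0) * (tbciySgn * tbciySw 0)) *
      ((tbciySgn * tbciySw 0) * (tbciySgn * tbciySw 0)) := by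
    rw [pow_succ, pow_succ, pow_succ, pow_one]; group
  rw [e]
  generalize hG : (tbciySgn * tbciySw 0) * (tbciySgn * tbciySw 0) = g
  have hstep : ∀ p : ℕ × Bool, g p = if p.1 ≤ 1 then (p.1, !p.2) else p := by
    rw [← hG]; exact tbciy_four_step
  have h1 : ∀ p : ℕ × Bool, (g * g) p = (1 : Equiv.Perm (ℕ × Bool)) p := by
    intro ⟨a, b⟩
    simp only [Equiv.Perm.mul_apply, hstep, apply_ite Prod.fst, apply_ite Prod.snd,
      Equiv.Perm.one_apply]
    split_ifs <;> simp_all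
  exact Equiv.ext h1

private lemma tbciy_flip {G : Type*} [Group G] {x y : G} {n : ℕ} (h : (x * y) ^ n = 1) :
    (y * x) ^ n = 1 := by
  have e : y * x = y * (x * y) * y⁻¹ := by group
  rw [e, conj_pow, h, mul_one, mul_inv_cancel]

private lemma tbciy_comm_sq {G : Type*} [Group G] {x y : G} (hc : x * y = y * x)
    (hx : x * x = 1) (hy : y * y = 1) : (x * y) ^ 2 = 1 := by
  rw [pow_two]
  calc x * y * (x * y) = x * (y * x) * y := by group
  _ = x * (x * y) * y := by rw [hc]
  _ = (x * x) * (y * y) := by group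
  _ = 1 := by rw [hx, hy, one_mul]

private lemma tbciy_comm_of_sq {G : Type*} [Group G] {x y : G} (hx : x * x = 1)
    (hy : y * y = 1) (h : (x * y) ^ 2 = 1) : x * y = y * x := by
  have h' : (x * y) * (x * y) = 1 := by rw [← pow_two]; exact h
  have hxi : x⁻¹ = x := inv_eq_of_mul_eq_one_right hx
  have hyi : y⁻¹ = y := inv_eq_of_mul_eq_one_right hy
  have := mul_eq_one_iff_eq_inv.mp h'
  rw [this, mul_inv_rev, hxi, hyi]

private lemma tbciy_braid_of {G : Type*} [Group G] {x y : G} (hx : x * x = 1)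
    (hy : y * y = 1) (h : (x * y) ^ 3 = 1) : x * y * x = y * x * y := by
  have h' : (x * y * x) * (y * x * y) = 1 := by
    have e : (x * y * x) * (y * x * y) = (x * y) ^ 3 := by
      rw [pow_succ, pow_succ, pow_one]; group
    rw [e]; exact h
  have hxi : x⁻¹ = x := inv_eq_of_mul_eq_one_right hx
  have hyi : y⁻¹ = y := inv_eq_of_mul_eq_one_right hy
  have := mul_eq_one_iff_eq_inv.mp h'
  rw [this]; simp only [mul_inv_rev, hxi, hyi]; group

private lemma tbciy_four_of {G : Type*} [Group G] {x y : G} (hx : x * x = 1)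
    (hy : y * y = 1) (h : (x * y) ^ 4 = 1) : (x * y) * (x * y) = (y * x) * (y * x) := by
  have h' : ((x * y) * (x * y)) * ((x * y) * (x * y)) = 1 := by
    have e : ((x * y) * (x * y)) * ((x * y) * (x * y)) = (x * y) ^ 4 := by
      rw [pow_succ, pow_succ, pow_succ, pow_one]; group
    rw [e]; exact h
  have hxi : x⁻¹ = x := inv_eq_of_mul_eq_one_right hx
  have hyi : y⁻¹ = y := inv_eq_of_mul_eq_one_right hy
  have := mul_eq_one_iff_eq_inv.mp h'
  rw [this]; simp only [mul_inv_rev, hxi, hyi, mul_assoc]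

private def tbciyPc (σ : Equiv.Perm ℕ) : Equiv.Perm (ℕ × Bool) :=
  Equiv.prodCongr σ (Equiv.refl Bool)

private lemma tbciyPc_apply (σ : Equiv.Perm ℕ) (p : ℕ × Bool) :
    tbciyPc σ p = (σ p.1, p.2) := rfl

private lemma tbciyPc_mul (σ τ : Equiv.Perm ℕ) :
    tbciyPc σ * tbciyPc τ = tbciyPc (σ * τ) := Equiv.ext fun _ => rfl

private lemma tbciyPc_one : tbciyPc 1 = 1 := Equiv.ext fun _ => rfl

private lemma tbciyPc_inv (σ : Equiv.Perm ℕ) : (tbciyPc σ)⁻¹ = tbciyPc σ⁻¹ :=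
  inv_eq_of_mul_eq_one_right (by rw [tbciyPc_mul, mul_inv_cancel, tbciyPc_one])

private lemma tbciySw_eq_pc (k : ℕ) : tbciySw k = tbciyPc (Equiv.swap k (k+1)) := rfl

private def tbciyF (r : ℕ) : Fin r → Equiv.Perm (ℕ × Bool) :=
  fun i => if (i : ℕ) = 0 then tbciySgn else tbciySw ((i : ℕ) - 1)

private lemma tbciyF_eq0 {r : ℕ} {i : Fin r} (h : (i:ℕ) = 0) : tbciyF r i = tbciySgn := by
  simp [tbciyF, h]

private lemma tbciyF_pos {r : ℕ} {i : Fin r} (h : (i:ℕ) ≠ 0) :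
    tbciyF r i = tbciySw ((i:ℕ) - 1) := by
  simp [tbciyF, h]

private lemma tbciyF_sq {r : ℕ} (i : Fin r) : tbciyF r i * tbciyF r i = 1 := by
  by_cases h : (i:ℕ) = 0
  · rw [tbciyF_eq0 h]; exact tbciySgn_sq
  · rw [tbciyF_pos h]; exact tbciySw_sq _

private lemma tbciyF_liftable {r : ℕ} (M : CoxeterMatrix (Fin r))
    (hM : ∀ i j : Fin r, M i j =
      if i = j then 1
      else if ((i : ℕ) = 0 ∧ (j : ℕ) = 1) ∨ ((j : ℕ) = 0 ∧ (i : ℕ) = 1) then 4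
      else if (i : ℕ) + 1 = (j : ℕ) ∨ (j : ℕ) + 1 = (i : ℕ) then 3 else 2) :
    M.IsLiftable (tbciyF r) := by
  intro i j
  rcases eq_or_ne i j with rfl | hne
  · rw [hM, if_pos rfl, pow_one]
    exact tbciyF_sq i
  · rw [hM, if_neg hne]
    have hv : (i:ℕ) ≠ (j:ℕ) := fun h => hne (Fin.ext h)
    by_cases h01 : ((i:ℕ) = 0 ∧ (j:ℕ) = 1) ∨ ((j:ℕ) = 0 ∧ (i:ℕ) = 1)
    · rw [if_pos h01]
      rcases h01 with ⟨h1, h2⟩ | ⟨h1, h2⟩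
      · rw [tbciyF_eq0 h1, tbciyF_pos (by omega), h2]
        exact tbciy_four
      · rw [tbciyF_eq0 h1, tbciyF_pos (by omega), h2]
        exact tbciy_flip tbciy_four
    · rw [if_neg h01]
      by_cases hadj : ((i:ℕ) + 1 = (j:ℕ)) ∨ ((j:ℕ) + 1 = (i:ℕ))
      · rw [if_pos hadj]
        rcases hadj with h1 | h1
        · have hi1 : 1 ≤ (i:ℕ) := by
            rcases Nat.eq_zero_or_pos (i:ℕ) with h0 | h
            · exact absurd (Or.inl ⟨h0, by omega⟩) h01
            · exact h
          rw [tbciyF_pos (by omega), tbciyF_pos (by omega)]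
          have e : (j:ℕ) - 1 = ((i:ℕ) - 1) + 1 := by omega
          rw [e]
          exact tbciySw_braid _
        · have hj1 : 1 ≤ (j:ℕ) := by
            rcases Nat.eq_zero_or_pos (j:ℕ) with h0 | h
            · exact absurd (Or.inr ⟨h0, by omega⟩) h01
            · exact h
          rw [tbciyF_pos (by omega), tbciyF_pos (by omega)]
          have e : (i:ℕ) - 1 = ((j:ℕ) - 1) + 1 := by omega
          rw [e]
          exact tbciy_flip (tbciySw_braid _)
      · rw [if_neg hadj]
        apply tbciy_comm_sq _ (tbciyF_sq i) (tbciyF_sq j)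
        by_cases hi0 : (i:ℕ) = 0
        · rw [tbciyF_eq0 hi0, tbciyF_pos (by omega)]
          exact tbciySgn_comm (by omega)
        · by_cases hj0 : (j:ℕ) = 0
          · rw [tbciyF_eq0 hj0, tbciyF_pos (by omega)]
            exact (tbciySgn_comm (by omega)).symm
          · rw [tbciyF_pos hi0, tbciyF_pos hj0]
            rcases Nat.lt_or_ge (i:ℕ) (j:ℕ) with h | h
            · exact tbciySw_comm (by omega)
            · exact (tbciySw_comm (by omega)).symm

private def tbciyTw {W : Type*} [Monoid W] (s : ℕ → W) (m k : ℕ) : W :=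
  ((List.range k).map (fun t => s (m - t))).prod

private lemma tbciyTw_zero {W : Type*} [Monoid W] (s : ℕ → W) (m : ℕ) :
    tbciyTw s m 0 = 1 := by simp [tbciyTw]

private lemma tbciyTw_succ {W : Type*} [Monoid W] (s : ℕ → W) (m k : ℕ) :
    tbciyTw s m (k+1) = tbciyTw s m k * s (m - k) := by
  simp [tbciyTw, List.range_succ]

/-- In the type `B` Weyl group `W = S_{2,r}`, for `1 ≤ i ≤ r` one has
`d_i⁻¹ S_r d_i ∩ S_r = S_{{1,…,i}} × S_{{i+1,…,r}}`, the Young subgroup generated by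
`{s_1,…,s_{i−1}, s_{i+1},…,s_{r−1}}`, and `d_0⁻¹ S_r d_0 ∩ S_r = S_r`. -/
theorem typeB_conjugate_intersection_young
    (r : ℕ) (hr : 1 ≤ r)
    (M : CoxeterMatrix (Fin r))
    (hM : ∀ i j : Fin r, M i j =
      if i = j then 1
      else if ((i : ℕ) = 0 ∧ (j : ℕ) = 1) ∨ ((j : ℕ) = 0 ∧ (i : ℕ) = 1) then 4
      else if (i : ℕ) + 1 = (j : ℕ) ∨ (j : ℕ) + 1 = (i : ℕ) then 3 else 2)
    (W : Type) [Group W] (cs : CoxeterSystem M W)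
    (s : ℕ → W) (hs : ∀ (i : ℕ) (h : i < r), s i = cs.simple ⟨i, h⟩)
    (Sr : Subgroup W)
    (hSr : Sr = Subgroup.closure {w | ∃ i : ℕ, 1 ≤ i ∧ i ≤ r - 1 ∧ w = s i})
    (tau : ℕ → W) (htau : ∀ j, tau j = ((List.range j).reverse.map s).prod)
    (d : ℕ → W) (hd : ∀ i, d i = ((List.range i).map (fun t => tau (t + 1))).prod) :
    (∀ i : ℕ, 1 ≤ i → i ≤ r →
      (Subgroup.map (MulAut.conj (d i)⁻¹).toMonoidHom Sr) ⊓ Sr =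
        Subgroup.closure {w | ∃ j : ℕ, 1 ≤ j ∧ j ≤ r - 1 ∧ j ≠ i ∧ w = s j}) ∧
    (Subgroup.map (MulAut.conj (d 0)⁻¹).toMonoidHom Sr) ⊓ Sr = Sr := by
  classical
  -- recurrences
  have tau_zero : tau 0 = 1 := by rw [htau]; simp
  have tau_succ : ∀ m, tau (m+1) = s m * tau m := by
    intro m
    rw [htau, htau, List.range_succ]
    simp
  have tau_one : tau 1 = s 0 := by rw [tau_succ, tau_zero, mul_one]
  have d_zero : d 0 = 1 := by rw [hd]; simp
  have d_succ : ∀ m, d (m+1) = d m * tau (m+1) := by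
    intro m
    rw [hd, hd, List.range_succ]
    simp
  -- relations
  have rel_pow : ∀ a b (ha : a < r) (hb : b < r),
      (s a * s b) ^ (M ⟨a, ha⟩ ⟨b, hb⟩) = 1 := by
    intro a b ha hb
    rw [hs a ha, hs b hb]
    exact cs.simple_mul_simple_pow _ _
  have rel_sq : ∀ a, a < r → s a * s a = 1 := by
    intro a ha
    rw [hs a ha]
    exact cs.simple_mul_simple_self _
  have rel_comm : ∀ a b, b + 2 ≤ a → a < r → s a * s b = s b * s a := by
    intro a b hab ha
    have hb : b < r := by omega
    have h2 := rel_pow a b ha hb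
    have hv : M ⟨a, ha⟩ ⟨b, hb⟩ = 2 := by
      rw [hM]
      rw [if_neg (show ¬(⟨a, ha⟩ : Fin r) = ⟨b, hb⟩ from by
        simp only [Fin.ext_iff, Fin.val_mk]; omega)]
      rw [if_neg (show ¬((a = 0 ∧ b = 1) ∨ (b = 0 ∧ a = 1)) from by omega)]
      rw [if_neg (show ¬(a + 1 = b ∨ b + 1 = a) from by omega)]
    rw [hv] at h2
    exact tbciy_comm_of_sq (rel_sq a ha) (rel_sq b hb) h2
  have rel_braid : ∀ a, 1 ≤ a → a + 1 < r →
      s a * s (a+1) * s a = s (a+1) * s a * s (a+1) := by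
    intro a ha1 ha2
    have ha : a < r := by omega
    have h2 := rel_pow a (a+1) ha ha2
    have hv : M ⟨a, ha⟩ ⟨a+1, ha2⟩ = 3 := by
      rw [hM]
      rw [if_neg (show ¬(⟨a, ha⟩ : Fin r) = ⟨a+1, ha2⟩ from by
        simp only [Fin.ext_iff, Fin.val_mk]; omega)]
      rw [if_neg (show ¬((a = 0 ∧ a + 1 = 1) ∨ (a + 1 = 0 ∧ a = 1)) from by omega)]
      rw [if_pos (show (a + 1 = a + 1 ∨ a + 1 + 1 = a) from Or.inl rfl)]
    rw [hv] at h2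
    exact tbciy_braid_of (rel_sq a ha) (rel_sq (a+1) ha2) h2
  have rel_four : 2 ≤ r → (s 1 * s 0) * (s 1 * s 0) = (s 0 * s 1) * (s 0 * s 1) := by
    intro hr2
    have h0 : (0:ℕ) < r := by omega
    have h1 : (1:ℕ) < r := by omega
    have h2 := rel_pow 1 0 h1 h0
    have hv : M ⟨1, h1⟩ ⟨0, h0⟩ = 4 := by
      rw [hM]
      rw [if_neg (show ¬(⟨1, h1⟩ : Fin r) = ⟨0, h0⟩ from by
        simp only [Fin.ext_iff, Fin.val_mk]; omega)]
      rw [if_pos (show ((1:ℕ) = 0 ∧ (0:ℕ) = 1) ∨ ((0:ℕ) = 0 ∧ (1:ℕ) = 1) from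
        Or.inr ⟨rfl, rfl⟩)]
    rw [hv] at h2
    exact tbciy_four_of (rel_sq 1 h1) (rel_sq 0 h0) h2
  -- commutation with tau and d
  have TC : ∀ m j, m ≤ r → j < r → m + 1 ≤ j → s j * tau m = tau m * s j := by
    intro m
    induction m with
    | zero => intro j _ _ _; rw [tau_zero, mul_one, one_mul]
    | succ m ih =>
      intro j hm hj hmj
      rw [tau_succ, ← mul_assoc, rel_comm j m (by omega) hj, mul_assoc,
        ih j (by omega) hj (by omega), mul_assoc]
  have DC : ∀ m j, m ≤ r → j < r → m + 1 ≤ j → s j * d m = d m * s j := by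
    intro m
    induction m with
    | zero => intro j _ _ _; rw [d_zero, mul_one, one_mul]
    | succ m ih =>
      intro j hm hj hmj
      rw [d_succ, ← mul_assoc, ih j (by omega) hj (by omega), mul_assoc,
        TC (m+1) j (by omega) hj (by omega), mul_assoc]
  have SH : ∀ m k, m ≤ r → 1 ≤ k → k + 2 ≤ m → s k * tau m = tau m * s (k+1) := by
    intro m
    induction m with
    | zero => intro k _ _ h; omega
    | succ m ih =>
      intro k hm hk1 hk2
      by_cases hc : k + 2 ≤ m
      · rw [tau_succ, ← mul_assoc, ← rel_comm m k (by omega) (by omega), mul_assoc,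
          ih k (by omega) hk1 hc, mul_assoc]
      · -- k = m - 1, i.e. k + 2 = m + 1, m = k + 1
        have hkm : m = k + 1 := by omega
        subst hkm
        -- goal : s k * tau (k+2) = tau (k+2) * s (k+1)
        rw [tau_succ, tau_succ]
        -- s k * (s (k+1) * (s k * tau k)) = s (k+1) * (s k * tau k) * s (k+1)
        have hb := rel_braid k hk1 (by omega)
        have htc := TC k (k+1) (by omega) (by omega) (by omega)
        calc s k * (s (k+1) * (s k * tau k))
            = (s k * s (k+1) * s k) * tau k := by group
        _ = (s (k+1) * s k * s (k+1)) * tau k := by rw [hb]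
        _ = (s (k+1) * s k) * (s (k+1) * tau k) := by group
        _ = (s (k+1) * s k) * (tau k * s (k+1)) := by rw [htc]
        _ = s (k+1) * (s k * tau k) * s (k+1) := by group
  have PL : ∀ m, 2 ≤ m → m ≤ r →
      s (m-1) * (tau (m-1) * tau m) = (tau (m-1) * tau m) * s 1 := by
    intro m
    induction m with
    | zero => intro h _; omega
    | succ m ih =>
      intro h2 hmr
      rcases Nat.lt_or_ge m 2 with hm2 | hm2
      · have hm1 : m = 1 := by omega
        subst hm1
        simp only [Nat.add_sub_cancel]
        rw [tau_succ 1, tau_one]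
        have h4 := rel_four (by omega)
        calc s 1 * (s 0 * (s 1 * s 0)) = (s 1 * s 0) * (s 1 * s 0) := by
              rw [mul_assoc]
        _ = (s 0 * s 1) * (s 0 * s 1) := h4
        _ = (s 0 * (s 1 * s 0)) * s 1 := by
              rw [mul_assoc, mul_assoc, mul_assoc]
      · -- m ≥ 2 : use ih
        simp only [Nat.add_sub_cancel]
        have e1 : tau m = s (m-1) * tau (m-1) := by
          have := tau_succ (m-1)
          rw [show m - 1 + 1 = m by omega] at this
          exact this
        have e2 : tau (m+1) = s m * tau m := tau_succ m
        have ihm := ih (by omega) (by omega)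
        have htc : s m * tau (m-1) = tau (m-1) * s m :=
          TC (m-1) m (by omega) (by omega) (by omega)
        have hb : s (m-1) * s m * s (m-1) = s m * s (m-1) * s m := by
          have := rel_braid (m-1) (by omega) (by rw [show m - 1 + 1 = m by omega]; omega)
          rw [show m - 1 + 1 = m by omega] at this
          exact this
        calc s m * (tau m * tau (m+1))
            = s m * ((s (m-1) * tau (m-1)) * (s m * (s (m-1) * tau (m-1)))) := by
              rw [e2, e1]
        _ = (s m * s (m-1)) * ((tau (m-1) * s m) * (s (m-1) * tau (m-1))) := by group
        _ = (s m * s (m-1)) * ((s m * tau (m-1)) * (s (m-1) * tau (m-1))) := by rw [htc]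
        _ = ((s m * s (m-1)) * s m) * (tau (m-1) * (s (m-1) * tau (m-1))) := by group
        _ = ((s (m-1) * s m) * s (m-1)) * (tau (m-1) * (s (m-1) * tau (m-1))) := by
              rw [← hb]
        _ = (s (m-1) * s m) * (s (m-1) * (tau (m-1) * (s (m-1) * tau (m-1)))) := by group
        _ = (s (m-1) * s m) * (s (m-1) * (tau (m-1) * tau m)) := by rw [e1]
        _ = (s (m-1) * s m) * ((tau (m-1) * tau m) * s 1) := by rw [ihm]
        _ = (s (m-1) * (s m * tau (m-1))) * (tau m * s 1) := by rw [e1]; group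
        _ = (s (m-1) * (tau (m-1) * s m)) * (tau m * s 1) := by rw [htc]
        _ = (s (m-1) * tau (m-1)) * ((s m * tau m) * s 1) := by rw [e1]; group
        _ = tau m * tau (m+1) * s 1 := by rw [e2, e1]; group
  have CF1 : ∀ i, 1 ≤ i → i ≤ r → ∀ j, 1 ≤ j → j + 1 ≤ i →
      s j * d i = d i * s (i - j) := by
    intro i
    induction i with
    | zero => intro h _ _ _ _; omega
    | succ i ih =>
      intro hi1 hir j hj1 hji
      by_cases hc : j + 1 ≤ i
      · -- j ≤ i - 1
        have hi1' : 1 ≤ i := by omega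
        rw [d_succ, ← mul_assoc, ih hi1' (by omega) j hj1 hc, mul_assoc,
          SH (i+1) (i-j) (by omega) (by omega) (by omega), ← mul_assoc,
          show i - j + 1 = i + 1 - j by omega]
      · -- j = i
        have hji' : j = i := by omega
        subst hji'
        rw [show j + 1 - j = 1 by omega]
        -- d (j+1) = d (j-1) * (tau j * tau (j+1))
        have e1 : d (j+1) = d (j-1) * (tau j * tau (j+1)) := by
          rw [d_succ]
          have : d j = d (j-1) * tau j := by
            have := d_succ (j-1)
            rw [show j - 1 + 1 = j by omega] at this
            exact this
          rw [this, mul_assoc]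
        have hdc : s j * d (j-1) = d (j-1) * s j :=
          DC (j-1) j (by omega) (by omega) (by omega)
        have hpl : s j * (tau j * tau (j+1)) = (tau j * tau (j+1)) * s 1 := by
          have := PL (j+1) (by omega) (by omega)
          rw [Nat.add_sub_cancel] at this
          exact this
        rw [e1, ← mul_assoc, hdc, mul_assoc, hpl, ← mul_assoc]
  
  -- the representation
  have hlift := tbciyF_liftable M hM
  let Phi : W →* Equiv.Perm (ℕ × Bool) := cs.lift ⟨tbciyF r, hlift⟩
  have Phi_s : ∀ j (hj : j < r), Phi (s j) = tbciyF r ⟨j, hj⟩ := by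
    intro j hj
    rw [hs j hj]
    exact cs.lift_apply_simple hlift _
  have Phi_s0 : Phi (s 0) = tbciySgn := by
    rw [Phi_s 0 (by omega)]
    exact tbciyF_eq0 rfl
  have Phi_sj : ∀ j, j + 1 < r → Phi (s (j+1)) = tbciyPc (Equiv.swap j (j+1)) := by
    intro j hj
    rw [Phi_s (j+1) hj]
    rw [tbciyF_pos (by simp), tbciySw_eq_pc]
    rfl
  have Phi_sj' : ∀ j, 1 ≤ j → j < r → Phi (s j) = tbciyPc (Equiv.swap (j-1) j) := by
    intro j hj1 hj2
    have := Phi_sj (j-1) (by omega)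
    rw [show j - 1 + 1 = j by omega] at this
    exact this
  -- pointwise evaluation of tau and d
  have tau_eval : ∀ m, 1 ≤ m → m ≤ r → ∀ a b, Phi (tau m) (a, b) =
      if a = 0 then (m - 1, !b) else if a < m then (a - 1, b) else (a, b) := by
    intro m
    induction m with
    | zero => intro h; omega
    | succ m ih =>
      intro _ hmr a b
      rcases Nat.eq_zero_or_pos m with hm0 | hm1
      · subst hm0
        rw [tau_succ 0, tau_zero, mul_one, Phi_s0, tbciySgn_apply]
        by_cases ha : a = 0
        · subst ha; simp
        · rw [if_neg ha, if_neg ha, if_neg (by omega)]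
      · rw [tau_succ m, map_mul, Equiv.Perm.mul_apply,
          ih hm1 (by omega) a b]
        have hsm : Phi (s m) = tbciyPc (Equiv.swap (m-1) m) := Phi_sj' m hm1 (by omega)
        by_cases ha : a = 0
        · subst ha
          rw [if_pos rfl, if_pos rfl, hsm, tbciyPc_apply]
          have hsw : Equiv.swap (m-1) m (m-1) = m := Equiv.swap_apply_left (m-1) m
          simp only [hsw]
          rfl
        · rw [if_neg ha, if_neg ha]
          by_cases ha2 : a < m
          · rw [if_pos ha2, if_pos (by omega), hsm, tbciyPc_apply]
            have : Equiv.swap (m-1) m (a-1) = a - 1 :=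
              Equiv.swap_apply_of_ne_of_ne (by omega) (by omega)
            simp only [this]
          · by_cases ha3 : a = m
            · rw [ha3, if_neg (by omega), if_pos (by omega), hsm, tbciyPc_apply,
                Equiv.swap_apply_right]
            · rw [if_neg (by omega), if_neg (by omega), hsm, tbciyPc_apply]
              have : Equiv.swap (m-1) m a = a :=
                Equiv.swap_apply_of_ne_of_ne (by omega) (by omega)
              simp only [this]
  have d_eval : ∀ m, m ≤ r → ∀ a b, Phi (d m) (a, b) =
      if a < m then (m - 1 - a, !b) else (a, b) := by
    intro m
    induction m with
    | zero =>
      intro _ a b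
      rw [d_zero, map_one, Equiv.Perm.one_apply, if_neg (by omega)]
    | succ m ih =>
      intro hmr a b
      rw [d_succ m, map_mul, Equiv.Perm.mul_apply,
        tau_eval (m+1) (by omega) hmr a b]
      by_cases ha : a = 0
      · subst ha
        rw [if_pos rfl, if_pos (by omega), ih (by omega),
          if_neg (by omega)]
        rfl
      · rw [if_neg ha]
        by_cases ha2 : a < m + 1
        · rw [if_pos ha2, if_pos ha2, ih (by omega), if_pos (by omega)]
          have : m - 1 - (a - 1) = m + 1 - 1 - a := by omega
          rw [this]
        · rw [if_neg ha2, if_neg ha2, ih (by omega), if_neg (by omega)]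
  -- image of elements of the parabolic subgroups
  have memE : ∀ m, m ≤ r - 1 → ∀ x,
      x ∈ Subgroup.closure {w | ∃ j, 1 ≤ j ∧ j ≤ m ∧ w = s j} →
      ∃ σ : Equiv.Perm ℕ, Phi x = tbciyPc σ ∧ ∀ a, m + 1 ≤ a → σ a = a := by
    intro m hm x hx
    induction hx using Subgroup.closure_induction with
    | mem w hw =>
      obtain ⟨j, hj1, hj2, rfl⟩ := hw
      refine ⟨Equiv.swap (j-1) j, Phi_sj' j hj1 (by omega), ?_⟩
      intro a ha
      exact Equiv.swap_apply_of_ne_of_ne (by omega) (by omega)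
    | one => exact ⟨1, by rw [map_one, tbciyPc_one], fun a _ => rfl⟩
    | mul x y hx hy px py =>
      obtain ⟨σ1, e1, f1⟩ := px
      obtain ⟨σ2, e2, f2⟩ := py
      refine ⟨σ1 * σ2, by rw [map_mul, e1, e2, tbciyPc_mul], ?_⟩
      intro a ha
      rw [Equiv.Perm.mul_apply, f2 a ha, f1 a ha]
    | inv x hx px =>
      obtain ⟨σ1, e1, f1⟩ := px
      refine ⟨σ1⁻¹, by rw [map_inv, e1, tbciyPc_inv], ?_⟩
      intro a ha
      calc σ1⁻¹ a = σ1⁻¹ (σ1 a) := by rw [f1 a ha]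
      _ = a := Equiv.symm_apply_apply _ _
  -- commutation lemmas for the transversal words
  have tw_comm : ∀ m k j, m ≤ r - 1 → k ≤ m → 1 ≤ j → j + 1 ≤ m - k →
      s j * tbciyTw s m k = tbciyTw s m k * s j := by
    intro m k
    induction k with
    | zero => intro j _ _ _ _; rw [tbciyTw_zero, mul_one, one_mul]
    | succ k ih =>
      intro j hm hk hj1 hj2
      rw [tbciyTw_succ]
      calc s j * (tbciyTw s m k * s (m-k))
          = (s j * tbciyTw s m k) * s (m-k) := by group
      _ = (tbciyTw s m k * s j) * s (m-k) := by
            rw [ih j hm (by omega) hj1 (by omega)]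
      _ = tbciyTw s m k * (s j * s (m-k)) := by group
      _ = tbciyTw s m k * (s (m-k) * s j) := by
            rw [rel_comm (m-k) j (by omega) (by omega)]
      _ = (tbciyTw s m k * s (m-k)) * s j := by group
  have tw_shift : ∀ m k j, m ≤ r - 1 → k ≤ m → m - k + 2 ≤ j → j ≤ m →
      s (j-1) * tbciyTw s m k = tbciyTw s m k * s j := by
    intro m k
    induction k with
    | zero => intro j _ _ h3 h4; exfalso; omega
    | succ k ih =>
      intro j hm hk hj3 hj4
      by_cases c : m - k + 2 ≤ j
      · rw [tbciyTw_succ]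
        calc s (j-1) * (tbciyTw s m k * s (m-k))
            = (s (j-1) * tbciyTw s m k) * s (m-k) := by group
        _ = (tbciyTw s m k * s j) * s (m-k) := by rw [ih j hm (by omega) c hj4]
        _ = tbciyTw s m k * (s j * s (m-k)) := by group
        _ = tbciyTw s m k * (s (m-k) * s j) := by
              rw [rel_comm j (m-k) (by omega) (by omega)]
        _ = (tbciyTw s m k * s (m-k)) * s j := by group
      · have hj : j = m - k + 1 := by omega
        have hk1 : 1 ≤ k := by omega
        have hmk1 : 1 ≤ m - k := by omega
        subst hj
        have e : tbciyTw s m k = tbciyTw s m (k-1) * s (m-k+1) := by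
          have h0 := tbciyTw_succ s m (k-1)
          rw [show k - 1 + 1 = k by omega, show m - (k-1) = m - k + 1 by omega] at h0
          exact h0
        have hc : s (m-k) * tbciyTw s m (k-1) = tbciyTw s m (k-1) * s (m-k) :=
          tw_comm m (k-1) (m-k) hm (by omega) hmk1 (by omega)
        have hbr : s (m-k) * s (m-k+1) * s (m-k) = s (m-k+1) * s (m-k) * s (m-k+1) :=
          rel_braid (m-k) hmk1 (by omega)
        rw [show m - k + 1 - 1 = m - k by omega, tbciyTw_succ]
        calc s (m-k) * (tbciyTw s m k * s (m-k))
            = s (m-k) * ((tbciyTw s m (k-1) * s (m-k+1)) * s (m-k)) := by rw [e]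
        _ = (s (m-k) * tbciyTw s m (k-1)) * (s (m-k+1) * s (m-k)) := by group
        _ = (tbciyTw s m (k-1) * s (m-k)) * (s (m-k+1) * s (m-k)) := by rw [hc]
        _ = tbciyTw s m (k-1) * (s (m-k) * s (m-k+1) * s (m-k)) := by group
        _ = tbciyTw s m (k-1) * (s (m-k+1) * s (m-k) * s (m-k+1)) := by rw [hbr]
        _ = ((tbciyTw s m (k-1) * s (m-k+1)) * s (m-k)) * s (m-k+1) := by group
        _ = (tbciyTw s m k * s (m-k)) * s (m-k+1) := by rw [← e]
  -- every element of the parabolic decomposes along the transversal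
  have transversal : ∀ m, 1 ≤ m → m ≤ r - 1 → ∀ x,
      x ∈ Subgroup.closure {w | ∃ j, 1 ≤ j ∧ j ≤ m ∧ w = s j} →
      ∃ u k, u ∈ Subgroup.closure {w | ∃ j, 1 ≤ j ∧ j ≤ m - 1 ∧ w = s j} ∧ k ≤ m ∧
        x = u * tbciyTw s m k := by
    intro m hm1 hm2 x hx
    have key : ∀ (u : W) (k : ℕ),
        u ∈ Subgroup.closure {w | ∃ j, 1 ≤ j ∧ j ≤ m - 1 ∧ w = s j} → k ≤ m →
        ∀ j, 1 ≤ j → j ≤ m →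
        ∃ u' k', u' ∈ Subgroup.closure {w | ∃ j, 1 ≤ j ∧ j ≤ m - 1 ∧ w = s j} ∧ k' ≤ m ∧
          (u * tbciyTw s m k) * s j = u' * tbciyTw s m k' := by
      intro u k hu hk j hj1 hj2
      by_cases c1 : j + 1 ≤ m - k
      · refine ⟨u * s j, k, mul_mem hu (Subgroup.subset_closure ⟨j, hj1, by omega, rfl⟩),
          hk, ?_⟩
        rw [mul_assoc, ← tw_comm m k j hm2 hk hj1 c1, ← mul_assoc]
      · by_cases c2 : j = m - k
        · have hk' : k + 1 ≤ m := by omega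
          refine ⟨u, k + 1, hu, hk', ?_⟩
          rw [tbciyTw_succ, c2, mul_assoc]
        · by_cases c3 : j = m - k + 1
          · have hk1 : 1 ≤ k := by omega
            refine ⟨u, k - 1, hu, by omega, ?_⟩
            have e : tbciyTw s m k = tbciyTw s m (k-1) * s (m-k+1) := by
              have h0 := tbciyTw_succ s m (k-1)
              rw [show k - 1 + 1 = k by omega, show m - (k-1) = m - k + 1 by omega] at h0
              exact h0
            rw [e, c3, mul_assoc, mul_assoc, rel_sq (m-k+1) (by omega), mul_one]
          · have c4 : m - k + 2 ≤ j := by omega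
            refine ⟨u * s (j-1), k,
              mul_mem hu (Subgroup.subset_closure ⟨j-1, by omega, by omega, rfl⟩), hk, ?_⟩
            rw [mul_assoc, ← tw_shift m k j hm2 hk c4 hj2, ← mul_assoc]
    induction hx using Subgroup.closure_induction_right with
    | one => exact ⟨1, 0, one_mem _, by omega, by rw [tbciyTw_zero, mul_one]⟩
    | mul_right x hx y hy px =>
      obtain ⟨j, hj1, hj2, rfl⟩ := hy
      obtain ⟨u, k, hu, hk, rfl⟩ := px
      exact key u k hu hk j hj1 hj2
    | mul_inv_cancel x hx y hy px =>
      obtain ⟨j, hj1, hj2, rfl⟩ := hy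
      obtain ⟨u, k, hu, hk, rfl⟩ := px
      have hinv : (s j)⁻¹ = s j := by
        rw [hs j (by omega)]
        exact cs.inv_simple _
      rw [hinv]
      exact key u k hu hk j hj1 hj2
  -- evaluation of transversal words
  have tw_eval : ∀ m k, 1 ≤ m → m ≤ r - 1 → k ≤ m → ∀ b : Bool,
      Phi (tbciyTw s m k) (m - k, b) = (m, b) := by
    intro m k hm1 hm2
    induction k with
    | zero =>
      intro _ b
      rw [tbciyTw_zero, map_one, Equiv.Perm.one_apply]
      rfl
    | succ k ih =>
      intro hk b
      rw [tbciyTw_succ, map_mul, Equiv.Perm.mul_apply]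
      have h1 : Phi (s (m-k)) = tbciyPc (Equiv.swap (m-k-1) (m-k)) :=
        Phi_sj' (m-k) (by omega) (by omega)
      rw [h1, tbciyPc_apply]
      have e : (m - (k+1), b).1 = m - k - 1 := by simp; omega
      have e2 : Equiv.swap (m-k-1) (m-k) (m - (k+1), b).1 = m - k := by
        have : (m - (k+1), b).1 = m - k - 1 := by simp; omega
        rw [this]
        have h3 : Equiv.swap (m-k-1) (m-k) (m-k-1) = m - k := Equiv.swap_apply_left _ _
        exact h3
      rw [show (m - (k+1), b).2 = b from rfl, e2]
      exact ih (by omega) b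
  -- faithfulness on the parabolic subgroup
  have faithful : ∀ m, m ≤ r - 1 → ∀ x,
      x ∈ Subgroup.closure {w | ∃ j, 1 ≤ j ∧ j ≤ m ∧ w = s j} →
      Phi x = 1 → x = 1 := by
    intro m
    induction m with
    | zero =>
      intro _ x hx _
      have hempty : {w : W | ∃ j, 1 ≤ j ∧ j ≤ 0 ∧ w = s j} = ∅ := by
        ext w; simp only [Set.mem_setOf_eq, Set.mem_empty_iff_false, iff_false]
        rintro ⟨j, hj1, hj2, _⟩; omega
      rw [hempty, Subgroup.closure_empty, Subgroup.mem_bot] at hx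
      exact hx
    | succ m ihm =>
      intro hm x hx hx1
      obtain ⟨u, k, hu, hk, rfl⟩ := transversal (m+1) (by omega) hm x hx
      obtain ⟨σu, hσu, hfixu⟩ := memE m (by omega) u hu
      have h1 : Phi (u * tbciyTw s (m+1) k) (m + 1 - k, true) = (m + 1 - k, true) := by
        rw [hx1, Equiv.Perm.one_apply]
      rw [map_mul, Equiv.Perm.mul_apply, tw_eval (m+1) k (by omega) hm hk true,
        hσu, tbciyPc_apply] at h1
      have h2 : σu (m+1) = m+1 := hfixu (m+1) (by omega)
      have h3 : ((σu (m+1) : ℕ), true) = ((m + 1 - k : ℕ), true) := h1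
      have h4 : m + 1 - k = m + 1 := by
        have := congrArg Prod.fst h3
        simp only at this
        omega
      have hk0 : k = 0 := by omega
      subst hk0
      rw [tbciyTw_zero, mul_one] at hx1 ⊢
      exact ihm (by omega) u hu hx1
  -- the descent induction
  have step2 : ∀ i, 1 ≤ i → i ≤ r → ∀ n : ℕ, ∀ x : W, x ∈ Sr →
      ∀ σ : Equiv.Perm ℕ, Phi x = tbciyPc σ →
      (∀ a, r ≤ a → σ a = a) → (∀ a, a < i → σ a < i) → tbciyNinv r σ = n →
      x ∈ Subgroup.closure {w | ∃ j, 1 ≤ j ∧ j ≤ r - 1 ∧ j ≠ i ∧ w = s j} := by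
    intro i hi1 hir n
    induction n using Nat.strong_induction_on with
    | _ n ih =>
      intro x hxSr σ hσ hfix hblk hN
      by_cases hdes : ∃ j, j + 1 < r ∧ j ≠ i - 1 ∧ σ (j+1) < σ j
      · obtain ⟨j, hj1, hj2, hj3⟩ := hdes
        have hsj : s (j+1) ∈ Sr := by
          rw [hSr]
          exact Subgroup.subset_closure ⟨j+1, by omega, by omega, rfl⟩
        have hx' : x * s (j+1) ∈ Sr := mul_mem hxSr hsj
        have hσ' : Phi (x * s (j+1)) = tbciyPc (σ * Equiv.swap j (j+1)) := by
          rw [map_mul, hσ, Phi_sj j hj1, tbciyPc_mul]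
        have hfix' : ∀ a, r ≤ a → (σ * Equiv.swap j (j+1)) a = a := by
          intro a ha
          rw [Equiv.Perm.mul_apply,
            Equiv.swap_apply_of_ne_of_ne (by omega) (by omega), hfix a ha]
        have hblk' : ∀ a, a < i → (σ * Equiv.swap j (j+1)) a < i := by
          intro a ha
          rw [Equiv.Perm.mul_apply]
          rcases eq_or_ne a j with rfl | haj
          · rw [Equiv.swap_apply_left]
            exact hblk (a+1) (by omega)
          · rcases eq_or_ne a (j+1) with rfl | haj2
            · rw [Equiv.swap_apply_right]
              exact hblk j (by omega)
            · rw [Equiv.swap_apply_of_ne_of_ne haj haj2]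
              exact hblk a ha
        have hNlt := tbciy_inv_descent σ hj1 hj3
        have hmem := ih (tbciyNinv r (σ * Equiv.swap j (j+1))) (by omega)
          (x * s (j+1)) hx' (σ * Equiv.swap j (j+1)) hσ' hfix' hblk' rfl
        have hxe : x = (x * s (j+1)) * s (j+1) := by
          rw [mul_assoc, rel_sq (j+1) (by omega), mul_one]
        rw [hxe]
        exact mul_mem hmem
          (Subgroup.subset_closure ⟨j+1, by omega, by omega, by omega, rfl⟩)
      · push_neg at hdes
        have hmono : ∀ j, j + 1 < r → j ≠ i - 1 → σ j < σ (j+1) := by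
          intro j h1 h2
          have h3 := hdes j h1 h2
          have h4 : σ j ≠ σ (j+1) := fun he => by
            have := σ.injective he; omega
          omega
        have hid1 : ∀ a, a < i → σ a = a := by
          intro a ha
          exact tbciy_blockid σ 0 i
            (fun a _ ha2 => ⟨Nat.zero_le _, hblk a ha2⟩)
            (fun j _ hj => hmono j (by omega) (by omega)) a (Nat.zero_le _) ha
        have himaps : ∀ a, i ≤ a → a < r → i ≤ σ a ∧ σ a < r := by
          intro a ha1 ha2
          constructor
          · by_contra hc
            push_neg at hc
            have hc2 : σ (σ a) = σ a := hid1 (σ a) hc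
            have := σ.injective hc2
            omega
          · by_contra hc
            push_neg at hc
            have hc2 : σ (σ a) = σ a := hfix (σ a) hc
            have := σ.injective hc2
            omega
        have hid2 : ∀ a, i ≤ a → a < r → σ a = a :=
          tbciy_blockid σ i r himaps (fun j hj1 hj2 => hmono j hj2 (by omega))
        have hσ1 : σ = 1 := by
          apply Equiv.ext
          intro a
          simp only [Equiv.Perm.one_apply]
          rcases Nat.lt_or_ge a i with h | h
          · exact hid1 a h
          · rcases Nat.lt_or_ge a r with h2 | h2
            · exact hid2 a h h2
            · exact hfix a h2
        have hPhix : Phi x = 1 := by rw [hσ, hσ1, tbciyPc_one]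
        have hx1 : x = 1 := by
          apply faithful (r-1) le_rfl x _ hPhix
          rw [← hSr]; exact hxSr
        rw [hx1]
        exact one_mem _
  -- conclusion
  constructor
  · intro i hi1 hir
    apply le_antisymm
    · -- hard inclusion
      intro x hx
      obtain ⟨hxm, hxSr⟩ := Subgroup.mem_inf.mp hx
      obtain ⟨y, hySr, hyx⟩ := Subgroup.mem_map.mp hxm
      have hyx' : (d i)⁻¹ * y * (d i) = x := by
        have h0 := hyx
        simp only [MulEquiv.coe_toMonoidHom, MulAut.conj_apply, inv_inv] at h0
        exact h0
      have hxy : d i * x = y * d i := by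
        rw [← hyx']; group
      obtain ⟨σx, hσx, hfixx⟩ := memE (r-1) le_rfl x (by rw [← hSr]; exact hxSr)
      obtain ⟨σy, hσy, hfixy⟩ := memE (r-1) le_rfl y (by rw [← hSr]; exact hySr)
      have hfixx' : ∀ a, r ≤ a → σx a = a := by
        intro a ha; exact hfixx a (by omega)
      have hblock : ∀ a, a < i → σx a < i := by
        intro a ha
        have h1 : Phi (d i) (Phi x (a, true)) = Phi y (Phi (d i) (a, true)) := by
          have h0 := congrArg (fun w => Phi w ((a : ℕ), true)) hxy
          simpa only [map_mul, Equiv.Perm.mul_apply] using h0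
        rw [hσx, tbciyPc_apply] at h1
        by_contra hc
        push_neg at hc
        rw [d_eval i hir (σx a) true, if_neg (by omega),
          d_eval i hir a true, if_pos ha, hσy, tbciyPc_apply] at h1
        have := congrArg Prod.snd h1
        simp at this
      exact step2 i hi1 hir (tbciyNinv r σx) x hxSr σx hσx hfixx' hblock rfl
    · -- easy inclusion
      rw [Subgroup.closure_le]
      rintro w ⟨j, hj1, hj2, hjne, rfl⟩
      have hsj : s j ∈ Sr := by
        rw [hSr]; exact Subgroup.subset_closure ⟨j, hj1, hj2, rfl⟩
      refine Subgroup.mem_inf.mpr ⟨?_, hsj⟩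
      rcases Nat.lt_or_ge j i with hji | hji
      · -- j < i : use y = s (i - j)
        refine Subgroup.mem_map.mpr ⟨s (i-j), ?_, ?_⟩
        · rw [hSr]
          exact Subgroup.subset_closure ⟨i-j, by omega, by omega, rfl⟩
        · have hrel : s (i-j) * d i = d i * s j := by
            have h0 := CF1 i hi1 hir (i-j) (by omega) (by omega)
            rw [show i - (i - j) = j by omega] at h0
            exact h0
          simp only [MulEquiv.coe_toMonoidHom, MulAut.conj_apply, inv_inv]
          rw [mul_assoc, hrel, ← mul_assoc, inv_mul_cancel, one_mul]
      · -- j > i : use y = s j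
        have hji' : i + 1 ≤ j := by omega
        refine Subgroup.mem_map.mpr ⟨s j, hsj, ?_⟩
        have hrel : s j * d i = d i * s j := DC i j hir (by omega) hji'
        simp only [MulEquiv.coe_toMonoidHom, MulAut.conj_apply, inv_inv]
        rw [mul_assoc, hrel, ← mul_assoc, inv_mul_cancel, one_mul]
  · rw [d_zero, inv_one]
    have he : (MulAut.conj (1 : W)).toMonoidHom = MonoidHom.id W := by
      ext x
      simp [MulAut.conj_apply]
    rw [he, Subgroup.map_id, inf_idem]
end
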